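/- arXiv:1402.3990 — 4 statements merged into one kernel-verified Lean document; each statement's English description precedes it below -/
import Mathlib

section
/- Kantorovich duality restriction to Dirac perturbations: Let μ be a positive measure on compact Ω, ν = ν₊ − ν₋ balanced with ν₊(Ω)=ν₋(Ω)=1, ε>0. Then W_p^p(μ+εν₊, μ+εν₋) ≤ sup_{x₀ ∈ supp(ν₊), x₁ ∈ supp(ν₋)} W_p^p(μ+εδ_{x₀}, μ+εδ_{x₁}). -/
open MeasureTheory ENNReal NNReal

/-- The `p`-Wasserstein cost `W_p^p(μ₁,μ₂)`: Kantorovich infimum over couplings of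
`∫∫ |x-y|^p dπ`. -/
noncomputable def WpCost {E : Type*} [MeasurableSpace E] [PseudoMetricSpace E]
    (p : ℝ) (μ₁ μ₂ : Measure E) : ℝ≥0∞ :=
  ⨅ (π : Measure (E × E)) (_ : π.map Prod.fst = μ₁ ∧ π.map Prod.snd = μ₂),
    ∫⁻ z, ENNReal.ofReal (dist z.1 z.2 ^ p) ∂π

/-- The `p`-Wasserstein metric `W_p(μ₁,μ₂) = (W_p^p)^{1/p}`. -/
noncomputable def Wp {E : Type*} [MeasurableSpace E] [PseudoMetricSpace E]
    (p : ℝ) (μ₁ μ₂ : Measure E) : ℝ≥0∞ :=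
  WpCost p μ₁ μ₂ ^ (1 / p)

/-- The (topological) support of a measure: points all of whose neighborhoods have
positive measure. -/
def msupport {E : Type*} [MeasurableSpace E] [PseudoMetricSpace E] (ν : Measure E) :
    Set E := {x | ∀ r : ℝ, 0 < r → ν (Metric.ball x r) ≠ 0}

section helpers
variable {E : Type*} [MeasurableSpace E] [PseudoMetricSpace E] (ν : Measure E)

lemma isClosed_msupport : IsClosed (msupport ν) := by
  rw [← isOpen_compl_iff]
  rw [Metric.isOpen_iff]
  intro x hx
  simp only [Set.mem_compl_iff, msupport, Set.mem_setOf_eq, not_forall] at hx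
  obtain ⟨r, hr, hr0⟩ := hx
  push_neg at hr0
  refine ⟨r / 2, by linarith, fun y hy => ?_⟩
  simp only [Set.mem_compl_iff, msupport, Set.mem_setOf_eq, not_forall]
  refine ⟨r / 2, by linarith, ?_⟩
  push_neg
  refine measure_mono_null (fun z hz => ?_) hr0
  simp only [Metric.mem_ball] at *
  calc dist z x ≤ dist z y + dist y x := dist_triangle _ _ _
    _ < r / 2 + r / 2 := by gcongr
    _ = r := by ring

lemma measure_compl_msupport [SecondCountableTopology E] :
    ν (msupport ν)ᶜ = 0 := by
  classical
  have hcov : ∀ x : ↥((msupport ν)ᶜ), ∃ r : ℝ, 0 < r ∧ ν (Metric.ball (x : E) r) = 0 := by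
    intro x
    have := x.2
    simp only [Set.mem_compl_iff, msupport, Set.mem_setOf_eq, not_forall] at this
    obtain ⟨r, hr, h0⟩ := this
    push_neg at h0
    exact ⟨r, hr, h0⟩
  choose r hr h0 using hcov
  obtain ⟨T, hTc, hTU⟩ := TopologicalSpace.isOpen_iUnion_countable
    (fun x : ↥((msupport ν)ᶜ) => Metric.ball (x : E) (r x)) (fun x => Metric.isOpen_ball)
  have hsub : (msupport ν)ᶜ ⊆ ⋃ x ∈ T, Metric.ball (x : E) (r x) := by
    rw [hTU]
    intro y hy
    exact Set.mem_iUnion.2 ⟨⟨y, hy⟩, Metric.mem_ball_self (hr _)⟩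
  refine measure_mono_null hsub ?_
  exact (measure_biUnion_null_iff hTc).2 fun x _ => h0 x

end helpers

section pair
variable {k : ℕ}

local notation "E" => EuclideanSpace ℝ (Fin k)

set_option maxHeartbeats 2000000 in
lemma pair_coupling (p : ℝ) (hp : 1 ≤ p)
    (μ νp νm : Measure E) [IsFiniteMeasure μ] [IsFiniteMeasure νp] [IsFiniteMeasure νm]
    (ε' : ℝ≥0∞) (hε0 : ε' ≠ 0) (hεt : ε' ≠ ∞)
    (Ω : Set E) (hΩm : MeasurableSet Ω)
    (a b : E) (A B : Set E) (hA : MeasurableSet A) (hB : MeasurableSet B)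
    (γ : Measure (E × E))
    (hγ1 : γ.map Prod.fst = μ + ε' • Measure.dirac a)
    (hγ2 : γ.map Prod.snd = μ + ε' • Measure.dirac b)
    (hγΩ : γ ((Ω ×ˢ Ω)ᶜ) = 0)
    (e' : ℝ≥0∞)
    (H1 : ∀ x ∈ insert a A, ∀ z ∈ Ω,
      ENNReal.ofReal (dist x z ^ p) ≤ ENNReal.ofReal (dist a z ^ p) + e')
    (H2 : ∀ y ∈ insert b B, ∀ z ∈ Ω,
      ENNReal.ofReal (dist z y ^ p) ≤ ENNReal.ofReal (dist z b ^ p) + e')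
    (H3 : ∀ x ∈ insert a A, ∀ y ∈ insert b B,
      ENNReal.ofReal (dist x y ^ p) ≤ ENNReal.ofReal (dist a b ^ p) + e') :
    ∃ π' : Measure (E × E),
      π'.map Prod.fst = (νp A * νm B) • μ + (νm B * ε') • νp.restrict A ∧
      π'.map Prod.snd = (νp A * νm B) • μ + (νp A * ε') • νm.restrict B ∧
      ∫⁻ z, ENNReal.ofReal (dist z.1 z.2 ^ p) ∂π' ≤
        νp A * νm B * ((∫⁻ z, ENNReal.ofReal (dist z.1 z.2 ^ p) ∂γ)
          + 2 * γ Set.univ * e') := by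
  classical
  set cost : E × E → ℝ≥0∞ := fun z => ENNReal.ofReal (dist z.1 z.2 ^ p) with hcost
  have hcm : Measurable cost :=
    (((Real.continuous_rpow_const (by linarith)).comp continuous_dist).measurable).ennreal_ofReal
  -- basic sets
  set S : Set (E × E) := Prod.fst ⁻¹' {a} with hSdef
  set T : Set (E × E) := Prod.snd ⁻¹' {b} with hTdef
  have hSm : MeasurableSet S := (measurableSet_singleton a).preimage measurable_fst
  have hTm : MeasurableSet T := (measurableSet_singleton b).preimage measurable_snd
  -- pieces of γ
  set ρ1 := γ.restrict (Sᶜ ∩ Tᶜ) with hρ1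
  set ρ2 := γ.restrict (S ∩ Tᶜ) with hρ2
  set ρ3 := γ.restrict (Sᶜ ∩ T) with hρ3
  set m := γ (S ∩ T) with hm
  set β₂ := ρ2.map Prod.snd with hβ₂
  set β₃ := ρ3.map Prod.fst with hβ₃
  -- scalars
  set q := μ {a} + ε' with hq
  set r := μ {b} + ε' with hr
  have hqt : q ≠ ∞ := by
    simp only [hq, Ne, ENNReal.add_eq_top, not_or]
    exact ⟨measure_ne_top μ _, hεt⟩
  have hrt : r ≠ ∞ := by
    simp only [hr, Ne, ENNReal.add_eq_top, not_or]
    exact ⟨measure_ne_top μ _, hεt⟩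
  have hq0 : q ≠ 0 := fun h => hε0 (le_antisymm (h ▸ le_add_self) zero_le)
  have hr0 : r ≠ 0 := fun h => hε0 (le_antisymm (h ▸ le_add_self) zero_le)
  set c₁ := ε' / q with hc₁
  set c₁' := μ {a} / q with hc₁'
  set c₂ := ε' / r with hc₂
  set c₂' := μ {b} / r with hc₂'
  set wA := νp A with hwA
  set wB := νm B with hwB
  have hwAt : wA ≠ ∞ := measure_ne_top _ _
  have hwBt : wB ≠ ∞ := measure_ne_top _ _
  -- the two "spread" measures
  set Λp := (wA * c₁') • Measure.dirac a + c₁ • νp.restrict A with hΛp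
  set Λm := (wB * c₂') • Measure.dirac b + c₂ • νm.restrict B with hΛm
  -- scalar identities
  have hqc : c₁' + c₁ = 1 := by
    rw [hc₁', hc₁, ENNReal.div_add_div_same, ← hq, ENNReal.div_self hq0 hqt]
  have hrc : c₂' + c₂ = 1 := by
    rw [hc₂', hc₂, ENNReal.div_add_div_same, ← hr, ENNReal.div_self hr0 hrt]
  have hqc₁ : q * c₁ = ε' := by rw [hc₁, ENNReal.mul_div_cancel hq0 hqt]
  have hqc₁' : q * c₁' = μ {a} := by rw [hc₁', ENNReal.mul_div_cancel hq0 hqt]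
  have hrc₂ : r * c₂ = ε' := by rw [hc₂, ENNReal.mul_div_cancel hr0 hrt]
  have hrc₂' : r * c₂' = μ {b} := by rw [hc₂', ENNReal.mul_div_cancel hr0 hrt]
  -- values of γ on fibers
  have hγS : γ S = q := by
    rw [hSdef, ← Measure.map_apply measurable_fst (measurableSet_singleton a), hγ1]
    simp [Measure.dirac_apply_of_mem (Set.mem_singleton a), hq]
  have hγT : γ T = r := by
    rw [hTdef, ← Measure.map_apply measurable_snd (measurableSet_singleton b), hγ2]
    simp [Measure.dirac_apply_of_mem (Set.mem_singleton b), hr]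
  have hγSc : ∀ s : Set E, MeasurableSet s →
      γ (Prod.fst ⁻¹' s ∩ Sᶜ) = μ (s ∩ {a}ᶜ) := by
    intro s hs
    have : Prod.fst ⁻¹' s ∩ Sᶜ = Prod.fst ⁻¹' (s ∩ {a}ᶜ) := by
      rw [hSdef, Set.preimage_inter, Set.preimage_compl]
    rw [this, ← Measure.map_apply measurable_fst (hs.inter (measurableSet_singleton a).compl),
      hγ1]
    have ha : a ∉ s ∩ {a}ᶜ := fun h => h.2 rfl
    simp [Measure.dirac_apply' _ (hs.inter (measurableSet_singleton a).compl),
      Set.indicator_of_notMem ha]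
  have hγTc : ∀ s : Set E, MeasurableSet s →
      γ (Prod.snd ⁻¹' s ∩ Tᶜ) = μ (s ∩ {b}ᶜ) := by
    intro s hs
    have : Prod.snd ⁻¹' s ∩ Tᶜ = Prod.snd ⁻¹' (s ∩ {b}ᶜ) := by
      rw [hTdef, Set.preimage_inter, Set.preimage_compl]
    rw [this, ← Measure.map_apply measurable_snd (hs.inter (measurableSet_singleton b).compl),
      hγ2]
    have hb : b ∉ s ∩ {b}ᶜ := fun h => h.2 rfl
    simp [Measure.dirac_apply' _ (hs.inter (measurableSet_singleton b).compl),
      Set.indicator_of_notMem hb]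
  -- masses
  have hβ₂u : β₂ Set.univ + m = q := by
    have h1 : β₂ Set.univ = γ (S ∩ Tᶜ) := by
      rw [hβ₂, Measure.map_apply measurable_snd MeasurableSet.univ, hρ2, Set.preimage_univ,
        Measure.restrict_apply MeasurableSet.univ, Set.univ_inter]
    have h2 : γ (S ∩ T) + γ (S \ T) = γ S := measure_inter_add_diff S hTm
    rw [h1, ← hγS, ← h2, hm, Set.diff_eq]
    ring
  have hβ₃u : β₃ Set.univ + m = r := by
    have h1 : β₃ Set.univ = γ (T ∩ Sᶜ) := by
      rw [hβ₃, Measure.map_apply measurable_fst MeasurableSet.univ, hρ3, Set.preimage_univ,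
        Measure.restrict_apply MeasurableSet.univ, Set.univ_inter, Set.inter_comm]
    have h2 : γ (T ∩ S) + γ (T \ S) = γ T := measure_inter_add_diff T hSm
    rw [h1, ← hγT, ← h2, hm, Set.diff_eq, Set.inter_comm S T]
    ring
  have hΛpu : Λp Set.univ = wA := by
    rw [hΛp]
    simp only [Measure.add_apply, Measure.smul_apply, smul_eq_mul,
      Measure.restrict_apply MeasurableSet.univ, Set.univ_inter, measure_univ, mul_one, ← hwA]
    calc wA * c₁' + c₁ * wA = wA * (c₁' + c₁) := by ring
      _ = wA := by rw [hqc, mul_one]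
  have hΛmu : Λm Set.univ = wB := by
    rw [hΛm]
    simp only [Measure.add_apply, Measure.smul_apply, smul_eq_mul,
      Measure.restrict_apply MeasurableSet.univ, Set.univ_inter, measure_univ, mul_one, ← hwB]
    calc wB * c₂' + c₂ * wB = wB * (c₂' + c₂) := by ring
      _ = wB := by rw [hrc, mul_one]
  -- finiteness
  haveI : IsFiniteMeasure Λp := ⟨by rw [hΛpu]; exact hwAt.lt_top⟩
  haveI : IsFiniteMeasure Λm := ⟨by rw [hΛmu]; exact hwBt.lt_top⟩
  have hβ₂le : β₂ Set.univ ≤ q := hβ₂u ▸ le_self_add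
  have hβ₃le : β₃ Set.univ ≤ r := hβ₃u ▸ le_self_add
  haveI : IsFiniteMeasure β₂ := ⟨lt_of_le_of_lt hβ₂le hqt.lt_top⟩
  haveI : IsFiniteMeasure β₃ := ⟨lt_of_le_of_lt hβ₃le hrt.lt_top⟩
  -- the coupling
  set π' := (wA * wB) • ρ1 + wB • (Λp.prod β₂) + wA • (β₃.prod Λm) + m • (Λp.prod Λm) with hπ'
  have hsplitμ : ∀ (σ : Measure E) (c : E) (s : Set E), MeasurableSet s →
      σ (s ∩ {c}ᶜ) + σ {c} * Measure.dirac c s = σ s := by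
    intro σ c s hs
    by_cases hc : c ∈ s
    · rw [Measure.dirac_apply_of_mem hc, mul_one]
      have h1 : σ (s ∩ {c}) + σ (s \ {c}) = σ s :=
        measure_inter_add_diff s (measurableSet_singleton c)
      have h2 : s ∩ {c} = {c} :=
        Set.inter_eq_self_of_subset_right (Set.singleton_subset_iff.2 hc)
      rw [← h1, h2, Set.diff_eq]
      ring
    · rw [Measure.dirac_apply' _ hs, Set.indicator_of_notMem hc, mul_zero, add_zero]
      congr 1
      rw [Set.inter_eq_self_of_subset_left]
      intro x hx
      simp only [Set.mem_compl_iff, Set.mem_singleton_iff]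
      rintro rfl
      exact hc hx
  have hmarg1 : π'.map Prod.fst = (wA * wB) • μ + (wB * ε') • νp.restrict A := by
    rw [hπ', Measure.map_add _ _ measurable_fst, Measure.map_add _ _ measurable_fst,
      Measure.map_add _ _ measurable_fst, Measure.map_smul, Measure.map_smul,
      Measure.map_smul, Measure.map_smul, Measure.map_fst_prod, Measure.map_fst_prod,
      Measure.map_fst_prod]
    ext s hs
    simp only [Measure.add_apply, Measure.smul_apply, smul_eq_mul]
    have hρ1f : (ρ1.map Prod.fst) s = γ (Prod.fst ⁻¹' s ∩ (Sᶜ ∩ Tᶜ)) := by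
      rw [hρ1, Measure.map_apply measurable_fst hs,
        Measure.restrict_apply (hs.preimage measurable_fst)]
    have hβ₃s : β₃ s = γ (Prod.fst ⁻¹' s ∩ (Sᶜ ∩ T)) := by
      rw [hβ₃, Measure.map_apply measurable_fst hs, hρ3,
        Measure.restrict_apply (hs.preimage measurable_fst)]
    have hsum13 : γ (Prod.fst ⁻¹' s ∩ (Sᶜ ∩ Tᶜ)) + γ (Prod.fst ⁻¹' s ∩ (Sᶜ ∩ T))
        = μ (s ∩ {a}ᶜ) := by
      have e1 : Prod.fst ⁻¹' s ∩ (Sᶜ ∩ Tᶜ) = (Prod.fst ⁻¹' s ∩ Sᶜ) \ T := by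
        rw [Set.diff_eq, Set.inter_assoc]
      have e2 : Prod.fst ⁻¹' s ∩ (Sᶜ ∩ T) = (Prod.fst ⁻¹' s ∩ Sᶜ) ∩ T := by
        rw [Set.inter_assoc]
      rw [e1, e2, add_comm, measure_inter_add_diff _ hTm, hγSc s hs]
    have hΛps : q * Λp s = wA * (μ {a} * Measure.dirac a s) + ε' * νp (s ∩ A) := by
      rw [hΛp]
      simp only [Measure.add_apply, Measure.smul_apply, smul_eq_mul,
        Measure.restrict_apply hs]
      calc q * (wA * c₁' * Measure.dirac a s + c₁ * νp (s ∩ A))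
          = wA * ((q * c₁') * Measure.dirac a s) + (q * c₁) * νp (s ∩ A) := by ring
        _ = wA * (μ {a} * Measure.dirac a s) + ε' * νp (s ∩ A) := by rw [hqc₁, hqc₁']
    calc wA * wB * (ρ1.map Prod.fst) s + wB * (β₂ Set.univ * Λp s)
          + wA * (Λm Set.univ * β₃ s) + m * (Λm Set.univ * Λp s)
        = wA * wB * ((ρ1.map Prod.fst) s + β₃ s) + wB * ((β₂ Set.univ + m) * Λp s) := by
          rw [hΛmu]; ring
      _ = wA * wB * μ (s ∩ {a}ᶜ) + wB * (q * Λp s) := by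
          rw [hρ1f, hβ₃s, hsum13, hβ₂u]
      _ = wA * wB * μ (s ∩ {a}ᶜ) + wB * (wA * (μ {a} * Measure.dirac a s) + ε' * νp (s ∩ A)) := by
          rw [hΛps]
      _ = wA * wB * (μ (s ∩ {a}ᶜ) + μ {a} * Measure.dirac a s) + wB * ε' * νp (s ∩ A) := by
          ring
      _ = wA * wB * μ s + wB * ε' * νp (s ∩ A) := by rw [hsplitμ μ a s hs]
      _ = wA * wB * μ s + wB * ε' * (νp.restrict A) s := by
          rw [Measure.restrict_apply hs]
  have hmarg2 : π'.map Prod.snd = (wA * wB) • μ + (wA * ε') • νm.restrict B := by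
    rw [hπ', Measure.map_add _ _ measurable_snd, Measure.map_add _ _ measurable_snd,
      Measure.map_add _ _ measurable_snd, Measure.map_smul, Measure.map_smul,
      Measure.map_smul, Measure.map_smul, Measure.map_snd_prod, Measure.map_snd_prod,
      Measure.map_snd_prod]
    ext s hs
    simp only [Measure.add_apply, Measure.smul_apply, smul_eq_mul]
    have hρ1s : (ρ1.map Prod.snd) s = γ (Prod.snd ⁻¹' s ∩ (Sᶜ ∩ Tᶜ)) := by
      rw [hρ1, Measure.map_apply measurable_snd hs,
        Measure.restrict_apply (hs.preimage measurable_snd)]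
    have hβ₂s : β₂ s = γ (Prod.snd ⁻¹' s ∩ (S ∩ Tᶜ)) := by
      rw [hβ₂, Measure.map_apply measurable_snd hs, hρ2,
        Measure.restrict_apply (hs.preimage measurable_snd)]
    have hsum12 : γ (Prod.snd ⁻¹' s ∩ (Sᶜ ∩ Tᶜ)) + γ (Prod.snd ⁻¹' s ∩ (S ∩ Tᶜ))
        = μ (s ∩ {b}ᶜ) := by
      have e1 : Prod.snd ⁻¹' s ∩ (Sᶜ ∩ Tᶜ) = (Prod.snd ⁻¹' s ∩ Tᶜ) \ S := by
        rw [Set.diff_eq]; ext z; simp only [Set.mem_inter_iff, Set.mem_compl_iff]; tauto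
      have e2 : Prod.snd ⁻¹' s ∩ (S ∩ Tᶜ) = (Prod.snd ⁻¹' s ∩ Tᶜ) ∩ S := by
        ext z; simp only [Set.mem_inter_iff, Set.mem_compl_iff]; tauto
      rw [e1, e2, add_comm, measure_inter_add_diff _ hSm, hγTc s hs]
    have hΛms : r * Λm s = wB * (μ {b} * Measure.dirac b s) + ε' * νm (s ∩ B) := by
      rw [hΛm]
      simp only [Measure.add_apply, Measure.smul_apply, smul_eq_mul,
        Measure.restrict_apply hs]
      calc r * (wB * c₂' * Measure.dirac b s + c₂ * νm (s ∩ B))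
          = wB * ((r * c₂') * Measure.dirac b s) + (r * c₂) * νm (s ∩ B) := by ring
        _ = wB * (μ {b} * Measure.dirac b s) + ε' * νm (s ∩ B) := by rw [hrc₂, hrc₂']
    calc wA * wB * (ρ1.map Prod.snd) s + wB * (Λp Set.univ * β₂ s)
          + wA * (β₃ Set.univ * Λm s) + m * (Λp Set.univ * Λm s)
        = wA * wB * ((ρ1.map Prod.snd) s + β₂ s) + wA * ((β₃ Set.univ + m) * Λm s) := by
          rw [hΛpu]; ring
      _ = wA * wB * μ (s ∩ {b}ᶜ) + wA * (r * Λm s) := by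
          rw [hρ1s, hβ₂s, hsum12, hβ₃u]
      _ = wA * wB * μ (s ∩ {b}ᶜ) + wA * (wB * (μ {b} * Measure.dirac b s) + ε' * νm (s ∩ B)) := by
          rw [hΛms]
      _ = wA * wB * (μ (s ∩ {b}ᶜ) + μ {b} * Measure.dirac b s) + wA * ε' * νm (s ∩ B) := by
          ring
      _ = wA * wB * μ s + wA * ε' * νm (s ∩ B) := by rw [hsplitμ μ b s hs]
      _ = wA * wB * μ s + wA * ε' * (νm.restrict B) s := by
          rw [Measure.restrict_apply hs]
  -- concentration facts
  have hβ₂Ω : β₂ Ωᶜ = 0 := by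
    rw [hβ₂, Measure.map_apply measurable_snd hΩm.compl, hρ2,
      Measure.restrict_apply (hΩm.compl.preimage measurable_snd)]
    refine measure_mono_null ?_ hγΩ
    intro z hz
    simp only [Set.mem_inter_iff, Set.mem_preimage, Set.mem_compl_iff, Set.mem_prod] at *
    exact fun h => hz.1 h.2
  have hβ₃Ω : β₃ Ωᶜ = 0 := by
    rw [hβ₃, Measure.map_apply measurable_fst hΩm.compl, hρ3,
      Measure.restrict_apply (hΩm.compl.preimage measurable_fst)]
    refine measure_mono_null ?_ hγΩ
    intro z hz
    simp only [Set.mem_inter_iff, Set.mem_preimage, Set.mem_compl_iff, Set.mem_prod] at *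
    exact fun h => hz.1 h.1
  have hΛpA : Λp (insert a A)ᶜ = 0 := by
    rw [hΛp]
    simp only [Measure.add_apply, Measure.smul_apply, smul_eq_mul]
    rw [Measure.dirac_apply' _ (hA.insert a).compl,
      Set.indicator_of_notMem (by simp : a ∉ (insert a A)ᶜ),
      Measure.restrict_apply (hA.insert a).compl]
    have he : (insert a A)ᶜ ∩ A = ∅ := by
      ext x
      simp only [Set.mem_inter_iff, Set.mem_compl_iff, Set.mem_insert_iff, Set.mem_empty_iff_false,
        iff_false, not_and, not_not]
      exact fun hx hxA => absurd (Or.inr hxA) hx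
    rw [he]
    simp
  have hΛmB : Λm (insert b B)ᶜ = 0 := by
    rw [hΛm]
    simp only [Measure.add_apply, Measure.smul_apply, smul_eq_mul]
    rw [Measure.dirac_apply' _ (hB.insert b).compl,
      Set.indicator_of_notMem (by simp : b ∉ (insert b B)ᶜ),
      Measure.restrict_apply (hB.insert b).compl]
    have he : (insert b B)ᶜ ∩ B = ∅ := by
      ext x
      simp only [Set.mem_inter_iff, Set.mem_compl_iff, Set.mem_insert_iff, Set.mem_empty_iff_false,
        iff_false, not_and, not_not]
      exact fun hx hxB => absurd (Or.inr hxB) hx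
    rw [he]
    simp
  -- null complements for the product measures
  have hprodnull : ∀ (σ τ : Measure E) (U V : Set E), SFinite τ → σ Uᶜ = 0 → τ Vᶜ = 0 →
      (σ.prod τ) ((U ×ˢ V)ᶜ) = 0 := by
    intro σ τ U V hτ hU hV
    have hsub : (U ×ˢ V)ᶜ ⊆ (Uᶜ ×ˢ (Set.univ : Set E)) ∪ ((Set.univ : Set E) ×ˢ Vᶜ) := by
      intro z hz
      simp only [Set.mem_compl_iff, Set.mem_prod, Set.mem_union, Set.mem_univ, true_and,
        and_true] at *
      tauto
    refine measure_mono_null hsub (measure_union_null ?_ ?_) <;>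
      rw [Measure.prod_prod] <;> simp [hU, hV]
  have hnull2 : (Λp.prod β₂) (((insert a A) ×ˢ Ω)ᶜ) = 0 :=
    hprodnull _ _ _ _ inferInstance hΛpA hβ₂Ω
  have hnull3 : (β₃.prod Λm) ((Ω ×ˢ (insert b B))ᶜ) = 0 :=
    hprodnull _ _ _ _ inferInstance hβ₃Ω hΛmB
  have hnull4 : (Λp.prod Λm) (((insert a A) ×ˢ (insert b B))ᶜ) = 0 :=
    hprodnull _ _ _ _ inferInstance hΛpA hΛmB
  -- cost bounds for the three product pieces
  set f2 : E → ℝ≥0∞ := fun w => ENNReal.ofReal (dist a w ^ p) with hf2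
  have hf2m : Measurable f2 :=
    (((Real.continuous_rpow_const (by linarith)).comp
      (continuous_const.dist continuous_id)).measurable).ennreal_ofReal
  set f3 : E → ℝ≥0∞ := fun w => ENNReal.ofReal (dist w b ^ p) with hf3
  have hf3m : Measurable f3 :=
    (((Real.continuous_rpow_const (by linarith)).comp
      (continuous_id.dist continuous_const)).measurable).ennreal_ofReal
  have hint2 : ∫⁻ w, f2 w ∂β₂ = ∫⁻ z, cost z ∂ρ2 := by
    rw [hβ₂, lintegral_map hf2m measurable_snd]
    refine lintegral_congr_ae ?_
    have hρ2S : ρ2 Sᶜ = 0 := by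
      rw [hρ2, Measure.restrict_apply hSm.compl]
      have he : Sᶜ ∩ (S ∩ Tᶜ) = ∅ := by
        ext z
        simp only [Set.mem_inter_iff, Set.mem_compl_iff, Set.mem_empty_iff_false, iff_false]
        tauto
      rw [he, measure_empty]
    rw [Filter.EventuallyEq, ae_iff]
    refine measure_mono_null ?_ hρ2S
    intro z hz
    simp only [Set.mem_setOf_eq] at hz
    simp only [Set.mem_compl_iff]
    intro hzS
    apply hz
    have hza : z.1 = a := hzS
    show ENNReal.ofReal (dist a z.2 ^ p) = ENNReal.ofReal (dist z.1 z.2 ^ p)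
    rw [hza]
  have hint3 : ∫⁻ w, f3 w ∂β₃ = ∫⁻ z, cost z ∂ρ3 := by
    rw [hβ₃, lintegral_map hf3m measurable_fst]
    refine lintegral_congr_ae ?_
    have hρ3T : ρ3 Tᶜ = 0 := by
      rw [hρ3, Measure.restrict_apply hTm.compl]
      have he : Tᶜ ∩ (Sᶜ ∩ T) = ∅ := by
        ext z
        simp only [Set.mem_inter_iff, Set.mem_compl_iff, Set.mem_empty_iff_false, iff_false]
        tauto
      rw [he, measure_empty]
    rw [Filter.EventuallyEq, ae_iff]
    refine measure_mono_null ?_ hρ3T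
    intro z hz
    simp only [Set.mem_setOf_eq] at hz
    simp only [Set.mem_compl_iff]
    intro hzT
    apply hz
    have hzb : z.2 = b := hzT
    show ENNReal.ofReal (dist z.1 b ^ p) = ENNReal.ofReal (dist z.1 z.2 ^ p)
    rw [hzb]
  have hc2 : ∫⁻ z, cost z ∂(Λp.prod β₂)
      ≤ wA * (∫⁻ z, cost z ∂ρ2) + wA * β₂ Set.univ * e' := by
    have hae : ∀ᵐ z ∂(Λp.prod β₂), cost z ≤ f2 z.2 + e' := by
      rw [ae_iff]
      refine measure_mono_null ?_ hnull2
      intro z hz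
      simp only [Set.mem_setOf_eq] at hz
      simp only [Set.mem_compl_iff]
      intro hzmem
      exact hz (H1 z.1 hzmem.1 z.2 hzmem.2)
    calc ∫⁻ z, cost z ∂(Λp.prod β₂) ≤ ∫⁻ z, (f2 z.2 + e') ∂(Λp.prod β₂) :=
          lintegral_mono_ae hae
      _ = (∫⁻ z, f2 z.2 ∂(Λp.prod β₂)) + e' * (Λp.prod β₂) Set.univ := by
          rw [lintegral_add_right _ measurable_const, lintegral_const]
      _ = wA * (∫⁻ w, f2 w ∂β₂) + e' * (wA * β₂ Set.univ) := by
          rw [← lintegral_map hf2m measurable_snd, Measure.map_snd_prod, hΛpu,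
            lintegral_smul_measure]
          congr 1
          rw [← Set.univ_prod_univ, Measure.prod_prod, hΛpu]
      _ = wA * (∫⁻ z, cost z ∂ρ2) + wA * β₂ Set.univ * e' := by rw [hint2]; ring
  have hc3 : ∫⁻ z, cost z ∂(β₃.prod Λm)
      ≤ wB * (∫⁻ z, cost z ∂ρ3) + wB * β₃ Set.univ * e' := by
    have hae : ∀ᵐ z ∂(β₃.prod Λm), cost z ≤ f3 z.1 + e' := by
      rw [ae_iff]
      refine measure_mono_null ?_ hnull3
      intro z hz
      simp only [Set.mem_setOf_eq] at hz
      simp only [Set.mem_compl_iff]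
      intro hzmem
      exact hz (H2 z.2 hzmem.2 z.1 hzmem.1)
    calc ∫⁻ z, cost z ∂(β₃.prod Λm) ≤ ∫⁻ z, (f3 z.1 + e') ∂(β₃.prod Λm) :=
          lintegral_mono_ae hae
      _ = (∫⁻ z, f3 z.1 ∂(β₃.prod Λm)) + e' * (β₃.prod Λm) Set.univ := by
          rw [lintegral_add_right _ measurable_const, lintegral_const]
      _ = wB * (∫⁻ w, f3 w ∂β₃) + e' * (β₃ Set.univ * wB) := by
          rw [← lintegral_map hf3m measurable_fst, Measure.map_fst_prod, hΛmu,
            lintegral_smul_measure]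
          congr 1
          rw [← Set.univ_prod_univ, Measure.prod_prod, hΛmu]
      _ = wB * (∫⁻ z, cost z ∂ρ3) + wB * β₃ Set.univ * e' := by rw [hint3]; ring
  have hc4 : ∫⁻ z, cost z ∂(Λp.prod Λm)
      ≤ (ENNReal.ofReal (dist a b ^ p) + e') * (wA * wB) := by
    have hae : ∀ᵐ z ∂(Λp.prod Λm), cost z ≤ ENNReal.ofReal (dist a b ^ p) + e' := by
      rw [ae_iff]
      refine measure_mono_null ?_ hnull4
      intro z hz
      simp only [Set.mem_setOf_eq] at hz
      simp only [Set.mem_compl_iff]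
      intro hzmem
      exact hz (H3 z.1 hzmem.1 z.2 hzmem.2)
    calc ∫⁻ z, cost z ∂(Λp.prod Λm)
        ≤ ∫⁻ _, (ENNReal.ofReal (dist a b ^ p) + e') ∂(Λp.prod Λm) := lintegral_mono_ae hae
      _ = (ENNReal.ofReal (dist a b ^ p) + e') * (Λp.prod Λm) Set.univ := lintegral_const _
      _ = (ENNReal.ofReal (dist a b ^ p) + e') * (wA * wB) := by
          rw [← Set.univ_prod_univ, Measure.prod_prod, hΛpu, hΛmu]
  -- identify the singleton piece
  have hST : S ∩ T = {((a, b) : E × E)} := by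
    ext z
    simp only [Set.mem_inter_iff, hSdef, hTdef, Set.mem_preimage, Set.mem_singleton_iff,
      Prod.ext_iff]
  have hρ4cost : ∫⁻ z, cost z ∂(γ.restrict (S ∩ T)) = m * ENNReal.ofReal (dist a b ^ p) := by
    rw [hST, Measure.restrict_singleton, lintegral_smul_measure, lintegral_dirac' _ hcm, hm, hST, smul_eq_mul]
  have hsplitγ : (∫⁻ z, cost z ∂ρ1) + (∫⁻ z, cost z ∂ρ2) + (∫⁻ z, cost z ∂ρ3)
      + (∫⁻ z, cost z ∂(γ.restrict (S ∩ T))) = ∫⁻ z, cost z ∂γ := by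
    have e1 : (γ.restrict Sᶜ).restrict Tᶜ = ρ1 := by
      rw [Measure.restrict_restrict hTm.compl, Set.inter_comm]
    have e2 : (γ.restrict S).restrict Tᶜ = ρ2 := by
      rw [Measure.restrict_restrict hTm.compl, Set.inter_comm]
    have e3 : (γ.restrict Sᶜ).restrict T = ρ3 := by
      rw [Measure.restrict_restrict hTm, Set.inter_comm]
    have e4 : (γ.restrict S).restrict T = γ.restrict (S ∩ T) := by
      rw [Measure.restrict_restrict hTm, Set.inter_comm]
    calc (∫⁻ z, cost z ∂ρ1) + (∫⁻ z, cost z ∂ρ2) + (∫⁻ z, cost z ∂ρ3)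
          + (∫⁻ z, cost z ∂(γ.restrict (S ∩ T)))
        = ((∫⁻ z, cost z ∂((γ.restrict S).restrict T))
            + (∫⁻ z, cost z ∂((γ.restrict S).restrict Tᶜ)))
          + ((∫⁻ z, cost z ∂((γ.restrict Sᶜ).restrict T))
            + (∫⁻ z, cost z ∂((γ.restrict Sᶜ).restrict Tᶜ))) := by
          rw [e1, e2, e3, e4]; ring
      _ = (∫⁻ z, cost z ∂(γ.restrict S)) + (∫⁻ z, cost z ∂(γ.restrict Sᶜ)) := by
          rw [lintegral_add_compl cost hTm, lintegral_add_compl cost hTm]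
      _ = ∫⁻ z, cost z ∂γ := lintegral_add_compl cost hSm
  -- total mass bound
  have hmass : β₂ Set.univ + β₃ Set.univ + m ≤ 2 * γ Set.univ := by
    have h1 : β₂ Set.univ + m ≤ γ Set.univ := by
      rw [hβ₂u, ← hγS]; exact measure_mono (Set.subset_univ S)
    have h2 : β₃ Set.univ ≤ γ Set.univ := by
      refine le_trans (le_trans le_self_add (le_of_eq hβ₃u)) ?_
      rw [← hγT]; exact measure_mono (Set.subset_univ T)
    calc β₂ Set.univ + β₃ Set.univ + m = (β₂ Set.univ + m) + β₃ Set.univ := by ring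
      _ ≤ γ Set.univ + γ Set.univ := add_le_add h1 h2
      _ = 2 * γ Set.univ := by ring
  have hcostπ : ∫⁻ z, cost z ∂π'
      ≤ wA * wB * ((∫⁻ z, cost z ∂γ) + 2 * γ Set.univ * e') := by
    calc ∫⁻ z, cost z ∂π'
        = wA * wB * (∫⁻ z, cost z ∂ρ1) + wB * (∫⁻ z, cost z ∂(Λp.prod β₂))
          + wA * (∫⁻ z, cost z ∂(β₃.prod Λm)) + m * (∫⁻ z, cost z ∂(Λp.prod Λm)) := by
          rw [hπ', lintegral_add_measure, lintegral_add_measure, lintegral_add_measure,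
            lintegral_smul_measure, lintegral_smul_measure, lintegral_smul_measure,
            lintegral_smul_measure]
          simp only [smul_eq_mul]
      _ ≤ wA * wB * (∫⁻ z, cost z ∂ρ1)
          + wB * (wA * (∫⁻ z, cost z ∂ρ2) + wA * β₂ Set.univ * e')
          + wA * (wB * (∫⁻ z, cost z ∂ρ3) + wB * β₃ Set.univ * e')
          + m * ((ENNReal.ofReal (dist a b ^ p) + e') * (wA * wB)) := by
          exact add_le_add (add_le_add (add_le_add le_rfl (mul_le_mul_right hc2 _))
            (mul_le_mul_right hc3 _)) (mul_le_mul_right hc4 _)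
      _ = wA * wB * ((∫⁻ z, cost z ∂ρ1) + (∫⁻ z, cost z ∂ρ2) + (∫⁻ z, cost z ∂ρ3)
            + m * ENNReal.ofReal (dist a b ^ p))
          + wA * wB * ((β₂ Set.univ + β₃ Set.univ + m) * e') := by ring
      _ = wA * wB * (∫⁻ z, cost z ∂γ)
          + wA * wB * ((β₂ Set.univ + β₃ Set.univ + m) * e') := by
          rw [← hρ4cost, hsplitγ]
      _ ≤ wA * wB * (∫⁻ z, cost z ∂γ) + wA * wB * ((2 * γ Set.univ) * e') := by
          exact add_le_add le_rfl (mul_le_mul_right (mul_le_mul_left hmass _) _)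
      _ = wA * wB * ((∫⁻ z, cost z ∂γ) + 2 * γ Set.univ * e') := by ring
  exact ⟨π', hmarg1, hmarg2, hcostπ⟩

end pair


set_option maxHeartbeats 2000000 in
/-- Dirac reduction: `W_p^p(μ+εν₊, μ+εν₋)` is bounded by the supremum of
`W_p^p(μ+εδ_{x₀}, μ+εδ_{x₁})` over `x₀ ∈ supp ν₊`, `x₁ ∈ supp ν₋`. -/
theorem dirac_reduction {k : ℕ} (p : ℝ) (hp : 1 ≤ p)
    (Ω : Set (EuclideanSpace ℝ (Fin k))) (hΩ : IsCompact Ω)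
    (μ νp νm : Measure (EuclideanSpace ℝ (Fin k))) [IsFiniteMeasure μ]
    (hμ : μ Ωᶜ = 0) (hνp : νp Ωᶜ = 0) (hνm : νm Ωᶜ = 0)
    (hνp1 : νp Set.univ = 1) (hνm1 : νm Set.univ = 1) (ε : ℝ) (hε : 0 < ε) :
    WpCost p (μ + ENNReal.ofReal ε • νp) (μ + ENNReal.ofReal ε • νm) ≤
      ⨆ (x₀ ∈ msupport νp) (x₁ ∈ msupport νm),
        WpCost p (μ + ENNReal.ofReal ε • Measure.dirac x₀)
          (μ + ENNReal.ofReal ε • Measure.dirac x₁) := by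
  classical
  haveI : IsFiniteMeasure νp := ⟨by rw [hνp1]; exact one_lt_top⟩
  haveI : IsFiniteMeasure νm := ⟨by rw [hνm1]; exact one_lt_top⟩
  set ε' := ENNReal.ofReal ε with hε'def
  have hε'0 : ε' ≠ 0 := (ENNReal.ofReal_pos.mpr hε).ne'
  have hε't : ε' ≠ ∞ := ENNReal.ofReal_ne_top
  have hΩm : MeasurableSet Ω := hΩ.isClosed.measurableSet
  -- support facts
  have hsuppsub : ∀ ν : Measure (EuclideanSpace ℝ (Fin k)), ν Ωᶜ = 0 → msupport ν ⊆ Ω := by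
    intro ν hν x hx
    by_contra hxΩ
    obtain ⟨r, hr, hball⟩ := Metric.isOpen_iff.mp hΩ.isClosed.isOpen_compl x hxΩ
    exact hx r hr (measure_mono_null hball hν)
  have hsuppP : msupport νp ⊆ Ω := hsuppsub νp hνp
  have hsuppM : msupport νm ⊆ Ω := hsuppsub νm hνm
  have hsuppP0 : νp (msupport νp)ᶜ = 0 := measure_compl_msupport νp
  have hsuppM0 : νm (msupport νm)ᶜ = 0 := measure_compl_msupport νm
  have hfull : ∀ ν : Measure (EuclideanSpace ℝ (Fin k)), ν (msupport ν)ᶜ = 0 →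
      ν Set.univ = 1 → ν (msupport ν) = 1 := by
    intro ν h0 h1
    have := measure_add_measure_compl (μ := ν) (isClosed_msupport ν).measurableSet
    rw [h0, add_zero] at this
    rw [this, h1]
  have hsuppPfull : νp (msupport νp) = 1 := hfull νp hsuppP0 hνp1
  have hsuppMfull : νm (msupport νm) = 1 := hfull νm hsuppM0 hνm1
  have hsuppPne : (msupport νp).Nonempty := by
    rw [Set.nonempty_iff_ne_empty]
    intro h
    rw [h] at hsuppPfull
    simp at hsuppPfull
  have hsuppMne : (msupport νm).Nonempty := by
    rw [Set.nonempty_iff_ne_empty]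
    intro h
    rw [h] at hsuppMfull
    simp at hsuppMfull
  -- distance bound
  obtain ⟨C0, hC0⟩ := Metric.isBounded_iff.mp hΩ.isBounded
  set C := max C0 0 with hCdef
  have hCnn : (0 : ℝ) ≤ C := le_max_right _ _
  have hCb : ∀ x ∈ Ω, ∀ y ∈ Ω, dist x y ≤ C := fun x hx y hy =>
    le_trans (hC0 hx hy) (le_max_left _ _)
  refine ENNReal.le_of_forall_pos_le_add fun η hη hStop => ?_
  set G := ⨆ (x₀ ∈ msupport νp) (x₁ ∈ msupport νm),
      WpCost p (μ + ε' • Measure.dirac x₀) (μ + ε' • Measure.dirac x₁) with hG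
  set η₂ := (η : ℝ≥0∞) / 2 with hη₂
  have hη₂0 : η₂ ≠ 0 := by
    simp only [hη₂, Ne, ENNReal.div_eq_zero_iff, ENNReal.coe_eq_zero, not_or]
    exact ⟨by exact_mod_cast hη.ne', ENNReal.ofNat_ne_top⟩
  have hη₂t : η₂ ≠ ∞ := by
    simp [hη₂, ENNReal.div_eq_top]
  -- choice of e
  set M := 2 * (μ Set.univ + ε') with hM
  have hMt : M ≠ ∞ := ENNReal.mul_ne_top ENNReal.ofNat_ne_top
    (ENNReal.add_ne_top.mpr ⟨measure_ne_top _ _, hε't⟩)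
  have hM10 : M + 1 ≠ 0 := by simp
  set e := (η₂ / (M + 1)).toReal with he
  have hdivt : η₂ / (M + 1) ≠ ∞ := (ENNReal.div_lt_top hη₂t hM10).ne
  have hdiv0 : η₂ / (M + 1) ≠ 0 := by
    simp only [Ne, ENNReal.div_eq_zero_iff, not_or]
    exact ⟨hη₂0, ENNReal.add_ne_top.mpr ⟨hMt, one_ne_top⟩⟩
  have he0 : 0 < e := ENNReal.toReal_pos hdiv0 hdivt
  have heM : M * ENNReal.ofReal e ≤ η₂ := by
    rw [he, ENNReal.ofReal_toReal hdivt]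
    calc M * (η₂ / (M + 1)) ≤ (M + 1) * (η₂ / (M + 1)) :=
          mul_le_mul_left le_self_add _
      _ ≤ η₂ := ENNReal.mul_div_le
  -- modulus of continuity
  obtain ⟨δ, hδ0, hδ1, key⟩ : ∃ δ : ℝ, 0 < δ ∧ δ ≤ 1 ∧ ∀ s t : ℝ, 0 ≤ s → s ≤ C → 0 ≤ t →
      t ≤ s + 2 * δ → ENNReal.ofReal (t ^ p) ≤ ENNReal.ofReal (s ^ p) + ENNReal.ofReal e := by
    have hcont : ContinuousOn (fun t : ℝ => t ^ p) (Set.Icc 0 (C + 2)) := fun t _ =>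
      (Real.continuousAt_rpow_const t p (Or.inr (by linarith))).continuousWithinAt
    have huc := isCompact_Icc.uniformContinuousOn_of_continuous hcont
    rw [Metric.uniformContinuousOn_iff] at huc
    obtain ⟨δ₀, hδ₀, hδuc⟩ := huc e he0
    refine ⟨min (δ₀ / 3) 1, by positivity, min_le_right _ _, ?_⟩
    intro s t hs hsC ht hts
    by_cases hst : t ≤ s
    · exact le_trans (ofReal_le_ofReal (Real.rpow_le_rpow ht hst (by linarith))) le_self_add
    · push_neg at hst
      have hmin1 : min (δ₀ / 3) 1 ≤ 1 := min_le_right _ _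
      have hmin2 : min (δ₀ / 3) 1 ≤ δ₀ / 3 := min_le_left _ _
      have htI : t ∈ Set.Icc 0 (C + 2) := ⟨ht, by linarith⟩
      have hsI : s ∈ Set.Icc 0 (C + 2) := ⟨hs, by linarith⟩
      have hdist : dist t s < δ₀ := by
        rw [Real.dist_eq, abs_of_pos (by linarith)]
        linarith
      have habs := hδuc t htI s hsI hdist
      rw [Real.dist_eq] at habs
      have hlt : t ^ p - s ^ p < e := lt_of_le_of_lt (le_abs_self _) habs
      calc ENNReal.ofReal (t ^ p) ≤ ENNReal.ofReal (s ^ p + e) :=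
            ofReal_le_ofReal (by linarith)
        _ ≤ ENNReal.ofReal (s ^ p) + ENNReal.ofReal e := ENNReal.ofReal_add_le
  set e' := ENNReal.ofReal e with he'
  -- dense sequences in the supports
  have hdense : ∀ ν : Measure (EuclideanSpace ℝ (Fin k)), (msupport ν).Nonempty →
      ∃ u : ℕ → EuclideanSpace ℝ (Fin k),
      (∀ i, u i ∈ msupport ν) ∧ ∀ x ∈ msupport ν, ∃ i, dist x (u i) < δ := by
    intro ν hne
    haveI : Nonempty ↥(msupport ν) := hne.to_subtype
    obtain ⟨u, hu⟩ := TopologicalSpace.exists_dense_seq ↥(msupport ν)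
    refine ⟨fun i => (u i : EuclideanSpace ℝ (Fin k)), fun i => (u i).2, fun x hx => ?_⟩
    obtain ⟨i, hi⟩ := (Metric.denseRange_iff.mp hu) ⟨x, hx⟩ δ hδ0
    exact ⟨i, by simpa [Subtype.dist_eq] using hi⟩
  obtain ⟨ap, hap_mem, hap_dense⟩ := hdense νp hsuppPne
  obtain ⟨bp, hbp_mem, hbp_dense⟩ := hdense νm hsuppMne
  -- partitions
  set A : ℕ → Set (EuclideanSpace ℝ (Fin k)) :=
    disjointed (fun i => msupport νp ∩ Metric.ball (ap i) δ) with hA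
  set B : ℕ → Set (EuclideanSpace ℝ (Fin k)) :=
    disjointed (fun j => msupport νm ∩ Metric.ball (bp j) δ) with hB
  have hAm : ∀ i, MeasurableSet (A i) := MeasurableSet.disjointed
    (fun i => ((isClosed_msupport νp).measurableSet.inter measurableSet_ball))
  have hBm : ∀ j, MeasurableSet (B j) := MeasurableSet.disjointed
    (fun j => ((isClosed_msupport νm).measurableSet.inter measurableSet_ball))
  have hAdisj : Pairwise (Function.onFun Disjoint A) := disjoint_disjointed _
  have hBdisj : Pairwise (Function.onFun Disjoint B) := disjoint_disjointed _
  have hAsub : ∀ i, A i ⊆ msupport νp ∩ Metric.ball (ap i) δ := disjointed_subset _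
  have hBsub : ∀ j, B j ⊆ msupport νm ∩ Metric.ball (bp j) δ := disjointed_subset _
  have hAU : ⋃ i, A i = msupport νp := by
    rw [hA, iUnion_disjointed]
    refine Set.Subset.antisymm (Set.iUnion_subset fun i => Set.inter_subset_left) ?_
    intro x hx
    obtain ⟨i, hi⟩ := hap_dense x hx
    exact Set.mem_iUnion.2 ⟨i, hx, Metric.mem_ball.mpr hi⟩
  have hBU : ⋃ j, B j = msupport νm := by
    rw [hB, iUnion_disjointed]
    refine Set.Subset.antisymm (Set.iUnion_subset fun j => Set.inter_subset_left) ?_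
    intro x hx
    obtain ⟨j, hj⟩ := hbp_dense x hx
    exact Set.mem_iUnion.2 ⟨j, hx, Metric.mem_ball.mpr hj⟩
  have hAsum : ∑' i, νp (A i) = 1 := by
    rw [← measure_iUnion hAdisj hAm, hAU, hsuppPfull]
  have hBsum : ∑' j, νm (B j) = 1 := by
    rw [← measure_iUnion hBdisj hBm, hBU, hsuppMfull]
  -- near-optimal couplings for each pair of grid points
  have hWle : ∀ i j : ℕ, WpCost p (μ + ε' • Measure.dirac (ap i))
      (μ + ε' • Measure.dirac (bp j)) ≤ G := by
    intro i j
    calc WpCost p (μ + ε' • Measure.dirac (ap i)) (μ + ε' • Measure.dirac (bp j))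
        ≤ ⨆ (x₁ ∈ msupport νm),
            WpCost p (μ + ε' • Measure.dirac (ap i)) (μ + ε' • Measure.dirac x₁) :=
          le_iSup₂ (f := fun x₁ (_ : x₁ ∈ msupport νm) =>
            WpCost p (μ + ε' • Measure.dirac (ap i)) (μ + ε' • Measure.dirac x₁))
            (bp j) (hbp_mem j)
      _ ≤ G := by
          rw [hG]
          exact le_iSup₂ (f := fun x₀ (_ : x₀ ∈ msupport νp) => ⨆ (x₁ ∈ msupport νm),
            WpCost p (μ + ε' • Measure.dirac x₀) (μ + ε' • Measure.dirac x₁))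
            (ap i) (hap_mem i)
  have hpair : ∀ i j : ℕ, ∃ γ : Measure (EuclideanSpace ℝ (Fin k) × EuclideanSpace ℝ (Fin k)),
      (γ.map Prod.fst = μ + ε' • Measure.dirac (ap i) ∧
        γ.map Prod.snd = μ + ε' • Measure.dirac (bp j)) ∧
      (∫⁻ z, ENNReal.ofReal (dist z.1 z.2 ^ p) ∂γ) < G + η₂ := by
    intro i j
    have hlt : WpCost p (μ + ε' • Measure.dirac (ap i)) (μ + ε' • Measure.dirac (bp j))
        < G + η₂ := lt_of_le_of_lt (hWle i j) (ENNReal.lt_add_right hStop.ne hη₂0)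
    rw [WpCost, iInf_lt_iff] at hlt
    obtain ⟨γ, hγ⟩ := hlt
    rw [iInf_lt_iff] at hγ
    obtain ⟨h12, h3⟩ := hγ
    exact ⟨γ, h12, h3⟩
  choose γf hγ12 hγ3 using hpair
  have hγ1 : ∀ i j, (γf i j).map Prod.fst = μ + ε' • Measure.dirac (ap i) :=
    fun i j => (hγ12 i j).1
  have hγ2 : ∀ i j, (γf i j).map Prod.snd = μ + ε' • Measure.dirac (bp j) :=
    fun i j => (hγ12 i j).2
  have hγΩ : ∀ i j, γf i j ((Ω ×ˢ Ω)ᶜ) = 0 := by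
    intro i j
    have hma : (ap i) ∉ Ωᶜ := fun h => h (hsuppP (hap_mem i))
    have hmb : (bp j) ∉ Ωᶜ := fun h => h (hsuppM (hbp_mem j))
    have h1 : (γf i j) (Prod.fst ⁻¹' Ωᶜ) = 0 := by
      rw [← Measure.map_apply measurable_fst hΩm.compl, hγ1]
      simp [hμ, Measure.dirac_apply' _ hΩm.compl, Set.indicator_of_notMem hma]
    have h2 : (γf i j) (Prod.snd ⁻¹' Ωᶜ) = 0 := by
      rw [← Measure.map_apply measurable_snd hΩm.compl, hγ2]
      simp [hμ, Measure.dirac_apply' _ hΩm.compl, Set.indicator_of_notMem hmb]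
    refine measure_mono_null ?_ (measure_union_null h1 h2)
    intro z hz
    simp only [Set.mem_compl_iff, Set.mem_prod, Set.mem_union, Set.mem_preimage] at *
    tauto
  have hγu : ∀ i j, γf i j Set.univ = μ Set.univ + ε' := by
    intro i j
    have h := congrArg (fun σ : Measure (EuclideanSpace ℝ (Fin k)) => σ Set.univ) (hγ1 i j)
    simp only [Measure.map_apply measurable_fst MeasurableSet.univ, Set.preimage_univ,
      Measure.add_apply, Measure.smul_apply, smul_eq_mul, measure_univ, mul_one] at h
    exact h
  -- apply the pair lemma
  have happly : ∀ i j : ℕ, ∃ π' : Measure (EuclideanSpace ℝ (Fin k) × EuclideanSpace ℝ (Fin k)),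
      π'.map Prod.fst = (νp (A i) * νm (B j)) • μ + (νm (B j) * ε') • νp.restrict (A i) ∧
      π'.map Prod.snd = (νp (A i) * νm (B j)) • μ + (νp (A i) * ε') • νm.restrict (B j) ∧
      ∫⁻ z, ENNReal.ofReal (dist z.1 z.2 ^ p) ∂π' ≤
        νp (A i) * νm (B j) * ((∫⁻ z, ENNReal.ofReal (dist z.1 z.2 ^ p) ∂(γf i j))
          + 2 * (γf i j) Set.univ * e') := by
    intro i j
    refine pair_coupling p hp μ νp νm ε' hε'0 hε't Ω hΩm (ap i) (bp j) (A i) (B j)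
      (hAm i) (hBm j) (γf i j) (hγ1 i j) (hγ2 i j) (hγΩ i j) e' ?_ ?_ ?_
    · intro x hx z hz
      have hdxz : dist x z ≤ dist (ap i) z + 2 * δ := by
        rcases Set.mem_insert_iff.mp hx with rfl | hxA
        · linarith
        · have hxa : dist x (ap i) < δ := Metric.mem_ball.mp (hAsub i hxA).2
          calc dist x z ≤ dist x (ap i) + dist (ap i) z := dist_triangle _ _ _
            _ ≤ dist (ap i) z + 2 * δ := by linarith
      exact key (dist (ap i) z) (dist x z) dist_nonneg
        (hCb _ (hsuppP (hap_mem i)) _ hz) dist_nonneg hdxz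
    · intro y hy z hz
      have hdzy : dist z y ≤ dist z (bp j) + 2 * δ := by
        rcases Set.mem_insert_iff.mp hy with rfl | hyB
        · linarith
        · have hyb : dist y (bp j) < δ := Metric.mem_ball.mp (hBsub j hyB).2
          calc dist z y ≤ dist z (bp j) + dist (bp j) y := dist_triangle _ _ _
            _ ≤ dist z (bp j) + 2 * δ := by
                rw [dist_comm (bp j) y]; linarith
      exact key (dist z (bp j)) (dist z y) dist_nonneg
        (hCb _ hz _ (hsuppM (hbp_mem j))) dist_nonneg hdzy
    · intro x hx y hy
      have hxa : dist x (ap i) ≤ δ := by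
        rcases Set.mem_insert_iff.mp hx with rfl | hxA
        · simp [hδ0.le]
        · exact (Metric.mem_ball.mp (hAsub i hxA).2).le
      have hyb : dist y (bp j) ≤ δ := by
        rcases Set.mem_insert_iff.mp hy with rfl | hyB
        · simp [hδ0.le]
        · exact (Metric.mem_ball.mp (hBsub j hyB).2).le
      have hdxy : dist x y ≤ dist (ap i) (bp j) + 2 * δ := by
        calc dist x y ≤ dist x (ap i) + dist (ap i) (bp j) + dist (bp j) y :=
              dist_triangle4 _ _ _ _
          _ ≤ dist (ap i) (bp j) + 2 * δ := by
              rw [dist_comm (bp j) y]; linarith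
      exact key (dist (ap i) (bp j)) (dist x y) dist_nonneg
        (hCb _ (hsuppP (hap_mem i)) _ (hsuppM (hbp_mem j))) dist_nonneg hdxy
  choose πf hπ1 hπ2 hπ3 using happly
  set π : Measure (EuclideanSpace ℝ (Fin k) × EuclideanSpace ℝ (Fin k)) :=
    Measure.sum (fun ij : ℕ × ℕ => πf ij.1 ij.2) with hπ
  -- full measure of supports relative to any measurable set
  have hsum_inter : ∀ (s : Set (EuclideanSpace ℝ (Fin k))), MeasurableSet s →
      ∑' i, νp (s ∩ A i) = νp s := by
    intro s hs
    have hd : Pairwise (Function.onFun Disjoint fun i => s ∩ A i) :=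
      hAdisj.mono fun i j h => h.mono Set.inter_subset_right Set.inter_subset_right
    rw [← measure_iUnion hd (fun i => hs.inter (hAm i)), ← Set.inter_iUnion, hAU]
    refine le_antisymm (measure_mono Set.inter_subset_left) ?_
    calc νp s ≤ νp (s ∩ msupport νp) + νp (s \ msupport νp) :=
          measure_le_inter_add_diff _ _ _
      _ ≤ νp (s ∩ msupport νp) + νp (msupport νp)ᶜ :=
          add_le_add le_rfl (measure_mono (fun x hx => hx.2))
      _ = νp (s ∩ msupport νp) := by rw [hsuppP0, add_zero]
  have hsum_interB : ∀ (s : Set (EuclideanSpace ℝ (Fin k))), MeasurableSet s →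
      ∑' j, νm (s ∩ B j) = νm s := by
    intro s hs
    have hd : Pairwise (Function.onFun Disjoint fun j => s ∩ B j) :=
      hBdisj.mono fun i j h => h.mono Set.inter_subset_right Set.inter_subset_right
    rw [← measure_iUnion hd (fun j => hs.inter (hBm j)), ← Set.inter_iUnion, hBU]
    refine le_antisymm (measure_mono Set.inter_subset_left) ?_
    calc νm s ≤ νm (s ∩ msupport νm) + νm (s \ msupport νm) :=
          measure_le_inter_add_diff _ _ _
      _ ≤ νm (s ∩ msupport νm) + νm (msupport νm)ᶜ :=
          add_le_add le_rfl (measure_mono (fun x hx => hx.2))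
      _ = νm (s ∩ msupport νm) := by rw [hsuppM0, add_zero]
  -- marginals of π
  have hπfst : π.map Prod.fst = μ + ε' • νp := by
    ext s hs
    rw [Measure.map_apply measurable_fst hs, hπ,
      Measure.sum_apply _ (hs.preimage measurable_fst)]
    have hterm : ∀ ij : ℕ × ℕ, (πf ij.1 ij.2) (Prod.fst ⁻¹' s)
        = νm (B ij.2) * (νp (A ij.1) * μ s + ε' * νp (s ∩ A ij.1)) := by
      intro ij
      rw [← Measure.map_apply measurable_fst hs, hπ1]
      simp only [Measure.add_apply, Measure.smul_apply, smul_eq_mul,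
        Measure.restrict_apply hs]
      ring
    calc ∑' ij : ℕ × ℕ, (πf ij.1 ij.2) (Prod.fst ⁻¹' s)
        = ∑' (i : ℕ) (j : ℕ), νm (B j) * (νp (A i) * μ s + ε' * νp (s ∩ A i)) := by
          rw [ENNReal.tsum_prod']
          exact tsum_congr fun i => tsum_congr fun j => hterm (i, j)
      _ = ∑' i : ℕ, (νp (A i) * μ s + ε' * νp (s ∩ A i)) := by
          refine tsum_congr fun i => ?_
          rw [ENNReal.tsum_mul_right, hBsum, one_mul]
      _ = (∑' i : ℕ, νp (A i)) * μ s + ε' * ∑' i : ℕ, νp (s ∩ A i) := by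
          rw [ENNReal.tsum_add, ENNReal.tsum_mul_right, ENNReal.tsum_mul_left]
      _ = μ s + ε' * νp s := by rw [hAsum, one_mul, hsum_inter s hs]
      _ = (μ + ε' • νp) s := by
          simp [Measure.add_apply, Measure.smul_apply, smul_eq_mul]
  have hπsnd : π.map Prod.snd = μ + ε' • νm := by
    ext s hs
    rw [Measure.map_apply measurable_snd hs, hπ,
      Measure.sum_apply _ (hs.preimage measurable_snd)]
    have hterm : ∀ ij : ℕ × ℕ, (πf ij.1 ij.2) (Prod.snd ⁻¹' s)
        = νp (A ij.1) * (νm (B ij.2) * μ s + ε' * νm (s ∩ B ij.2)) := by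
      intro ij
      rw [← Measure.map_apply measurable_snd hs, hπ2]
      simp only [Measure.add_apply, Measure.smul_apply, smul_eq_mul,
        Measure.restrict_apply hs]
      ring
    calc ∑' ij : ℕ × ℕ, (πf ij.1 ij.2) (Prod.snd ⁻¹' s)
        = ∑' (i : ℕ) (j : ℕ), νp (A i) * (νm (B j) * μ s + ε' * νm (s ∩ B j)) := by
          rw [ENNReal.tsum_prod']
          exact tsum_congr fun i => tsum_congr fun j => hterm (i, j)
      _ = ∑' i : ℕ, νp (A i) * (μ s + ε' * νm s) := by
          refine tsum_congr fun i => ?_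
          rw [ENNReal.tsum_mul_left]
          congr 1
          rw [ENNReal.tsum_add, ENNReal.tsum_mul_right, ENNReal.tsum_mul_left, hBsum,
            one_mul, hsum_interB s hs]
      _ = μ s + ε' * νm s := by
          rw [ENNReal.tsum_mul_right, hAsum, one_mul]
      _ = (μ + ε' • νm) s := by
          simp [Measure.add_apply, Measure.smul_apply, smul_eq_mul]
  -- cost of π
  have hπcost : (∫⁻ z, ENNReal.ofReal (dist z.1 z.2 ^ p) ∂π) ≤ G + ↑η := by
    rw [hπ, lintegral_sum_measure]
    have hbound : ∀ ij : ℕ × ℕ, (∫⁻ z, ENNReal.ofReal (dist z.1 z.2 ^ p) ∂(πf ij.1 ij.2))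
        ≤ νp (A ij.1) * νm (B ij.2) * (G + ↑η) := by
      intro ij
      refine le_trans (hπ3 ij.1 ij.2) (mul_le_mul_right ?_ _)
      calc (∫⁻ z, ENNReal.ofReal (dist z.1 z.2 ^ p) ∂(γf ij.1 ij.2))
            + 2 * (γf ij.1 ij.2) Set.univ * e'
          ≤ (G + η₂) + η₂ := by
            refine add_le_add (le_of_lt (hγ3 ij.1 ij.2)) ?_
            rw [hγu ij.1 ij.2]
            exact heM
        _ = G + ↑η := by rw [add_assoc, hη₂, ENNReal.add_halves]
    calc ∑' ij : ℕ × ℕ, (∫⁻ z, ENNReal.ofReal (dist z.1 z.2 ^ p) ∂(πf ij.1 ij.2))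
        ≤ ∑' ij : ℕ × ℕ, νp (A ij.1) * νm (B ij.2) * (G + ↑η) :=
          ENNReal.tsum_le_tsum hbound
      _ = G + ↑η := by
          rw [ENNReal.tsum_prod']
          calc ∑' (i : ℕ) (j : ℕ), νp (A i) * νm (B j) * (G + ↑η)
              = ∑' i : ℕ, νp (A i) * (G + ↑η) := by
                refine tsum_congr fun i => ?_
                have : ∀ j, νp (A i) * νm (B j) * (G + ↑η)
                    = νm (B j) * (νp (A i) * (G + ↑η)) := fun j => by ring
                rw [tsum_congr this, ENNReal.tsum_mul_right, hBsum, one_mul]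
            _ = G + ↑η := by rw [ENNReal.tsum_mul_right, hAsum, one_mul]
  -- conclude
  calc WpCost p (μ + ε' • νp) (μ + ε' • νm)
      ≤ ∫⁻ z, ENNReal.ofReal (dist z.1 z.2 ^ p) ∂π := by
        rw [WpCost]
        exact iInf_le_of_le π (iInf_le_of_le ⟨hπfst, hπsnd⟩ le_rfl)
    _ ≤ G + ↑η := hπcost
end

section
/- Dominated measure comparison: If μ̂ ≤ μ are positive measures on compact Ω and x₀, x₁ ∈ Ω, then for every ε > 0, W_p(μ+εδ_{x₀}, μ+εδ_{x₁}) ≤ W_p(μ̂+εδ_{x₀}, μ̂+εδ_{x₁}). -/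
open MeasureTheory ENNReal NNReal

/-- Dominated measure comparison: if `μ̂ ≤ μ`, then
`W_p(μ+εδ_{x₀}, μ+εδ_{x₁}) ≤ W_p(μ̂+εδ_{x₀}, μ̂+εδ_{x₁})`. -/
theorem dominated_comparison {k : ℕ} (p : ℝ) (hp : 1 ≤ p)
    (Ω : Set (EuclideanSpace ℝ (Fin k))) (hΩ : IsCompact Ω)
    (μ μhat : Measure (EuclideanSpace ℝ (Fin k))) [IsFiniteMeasure μ]
    (hμ : μ Ωᶜ = 0) (hle : μhat ≤ μ)
    (x₀ x₁ : EuclideanSpace ℝ (Fin k)) (hx₀ : x₀ ∈ Ω) (hx₁ : x₁ ∈ Ω)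
    (ε : ℝ) (hε : 0 < ε) :
    Wp p (μ + ENNReal.ofReal ε • Measure.dirac x₀)
        (μ + ENNReal.ofReal ε • Measure.dirac x₁) ≤
      Wp p (μhat + ENNReal.ofReal ε • Measure.dirac x₀)
        (μhat + ENNReal.ofReal ε • Measure.dirac x₁) := by
  have hfin : IsFiniteMeasure μhat := isFiniteMeasure_of_le μ hle
  have hcost : WpCost p (μ + ENNReal.ofReal ε • Measure.dirac x₀)
      (μ + ENNReal.ofReal ε • Measure.dirac x₁) ≤
      WpCost p (μhat + ENNReal.ofReal ε • Measure.dirac x₀)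
      (μhat + ENNReal.ofReal ε • Measure.dirac x₁) := by
    apply le_iInf₂
    intro π hπ
    set D : Measure (EuclideanSpace ℝ (Fin k) × EuclideanSpace ℝ (Fin k)) :=
      (μ - μhat).map (fun x => (x, x)) with hD
    have hdiag : Measurable (fun x : EuclideanSpace ℝ (Fin k) => (x, x)) :=
      measurable_id.prodMk measurable_id
    have hmapfst : D.map Prod.fst = μ - μhat := by
      rw [hD, Measure.map_map measurable_fst hdiag]
      exact Measure.map_id
    have hmapsnd : D.map Prod.snd = μ - μhat := by
      rw [hD, Measure.map_map measurable_snd hdiag]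
      exact Measure.map_id
    have hf : Measurable (fun z : EuclideanSpace ℝ (Fin k) × EuclideanSpace ℝ (Fin k) =>
        ENNReal.ofReal (dist z.1 z.2 ^ p)) :=
      (ENNReal.continuous_ofReal.comp ((Real.continuous_rpow_const
        (le_trans zero_le_one hp)).comp continuous_dist)).measurable
    have hfst : (π + D).map Prod.fst = μ + ENNReal.ofReal ε • Measure.dirac x₀ := by
      rw [Measure.map_add _ _ measurable_fst, hπ.1, hmapfst]
      rw [add_assoc, add_comm (ENNReal.ofReal ε • Measure.dirac x₀),
        ← add_assoc, add_comm μhat, Measure.sub_add_cancel_of_le hle]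
    have hsnd : (π + D).map Prod.snd = μ + ENNReal.ofReal ε • Measure.dirac x₁ := by
      rw [Measure.map_add _ _ measurable_snd, hπ.2, hmapsnd]
      rw [add_assoc, add_comm (ENNReal.ofReal ε • Measure.dirac x₁),
        ← add_assoc, add_comm μhat, Measure.sub_add_cancel_of_le hle]
    have hDcost : ∫⁻ z, ENNReal.ofReal (dist z.1 z.2 ^ p) ∂D = 0 := by
      rw [hD, lintegral_map hf hdiag]
      simp only [dist_self]
      rw [Real.zero_rpow (by linarith : p ≠ 0)]
      simp
    have h1 : WpCost p (μ + ENNReal.ofReal ε • Measure.dirac x₀)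
        (μ + ENNReal.ofReal ε • Measure.dirac x₁)
        ≤ ∫⁻ z, ENNReal.ofReal (dist z.1 z.2 ^ p) ∂(π + D) :=
      iInf₂_le (π + D) ⟨hfst, hsnd⟩
    rwa [lintegral_add_measure, hDcost, add_zero] at h1
  simp only [Wp]
  exact ENNReal.rpow_le_rpow hcost (by positivity)
end

section
/- Lower bound via piecewise-constant dual functions: Let μ = Σ_{j=1}^m μ_j with supp(μ_i) pairwise disjoint closed sets A_i, ν a neutral measure supported in supp(μ) with ν̄_i := ν(A_i), and z₁,…,z_m ∈ ℝ satisfying z_i − z_j ≤ dist(A_i, A_j)^p for all i, j. Then for every ε > 0, W_p^p(μ + εν₊, μ + εν₋) ≥ ε Σ_i z_i ν̄_i. -/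
open MeasureTheory ENNReal NNReal

/-- Distance between two sets: `dist(A,B) = inf {|x-y| : x ∈ A, y ∈ B}`. -/
noncomputable def setDist {E : Type*} [PseudoMetricSpace E] (A B : Set E) : ℝ :=
  sInf ((fun q : E × E => dist q.1 q.2) '' (A ×ˢ B))

theorem setDist_le {E : Type*} [PseudoMetricSpace E] {A B : Set E} {x y : E}
    (hx : x ∈ A) (hy : y ∈ B) : setDist A B ≤ dist x y := by
  refine csInf_le ⟨0, ?_⟩ ?_
  · rintro r ⟨q, _, rfl⟩; exact dist_nonneg
  · exact ⟨(x, y), ⟨hx, hy⟩, rfl⟩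

theorem setDist_nonneg' {E : Type*} [PseudoMetricSpace E] {A B : Set E} {x y : E}
    (hx : x ∈ A) (hy : y ∈ B) : 0 ≤ setDist A B := by
  refine le_csInf ⟨dist x y, ⟨(x, y), ⟨hx, hy⟩, rfl⟩⟩ ?_
  rintro r ⟨q, _, rfl⟩; exact dist_nonneg

/-- Lower bound via piecewise-constant dual functions:
`W_p^p(μ+εν₊, μ+εν₋) ≥ ε Σᵢ zᵢ ν̄ᵢ` whenever `zᵢ - zⱼ ≤ dist(Aᵢ,Aⱼ)^p`. -/
theorem piecewise_dual_lower_bound {k : ℕ} (p : ℝ) (hp : 1 ≤ p) (m : ℕ)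
    (A : Fin m → Set (EuclideanSpace ℝ (Fin k)))
    (hclosed : ∀ i, IsClosed (A i)) (hdisj : Pairwise (Function.onFun Disjoint A))
    (μi : Fin m → Measure (EuclideanSpace ℝ (Fin k)))
    [∀ i, IsFiniteMeasure (μi i)] (hμsupp : ∀ i, μi i (A i)ᶜ = 0)
    (νp νm : Measure (EuclideanSpace ℝ (Fin k)))
    [IsFiniteMeasure νp] [IsFiniteMeasure νm]
    (hνp : νp (⋃ i, A i)ᶜ = 0) (hνm : νm (⋃ i, A i)ᶜ = 0)
    (hbal : νp Set.univ = νm Set.univ)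
    (nub : Fin m → ℝ) (hnub : ∀ i, nub i = (νp (A i)).toReal - (νm (A i)).toReal)
    (z : Fin m → ℝ) (hz : ∀ i j, z i - z j ≤ setDist (A i) (A j) ^ p)
    (ε : ℝ) (hε : 0 < ε) :
    ENNReal.ofReal (ε * ∑ i, z i * nub i) ≤
      WpCost p ((∑ i, μi i) + ENNReal.ofReal ε • νp)
        ((∑ i, μi i) + ENNReal.ofReal ε • νm) := by
  classical
  set φ : EuclideanSpace ℝ (Fin k) → ℝ :=
    fun x => ∑ i, Set.indicator (A i) (fun _ => z i) x with hφdef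
  have hAm : ∀ i, MeasurableSet (A i) := fun i => (hclosed i).measurableSet
  set S : Set (EuclideanSpace ℝ (Fin k)) := ⋃ i, A i with hSdef
  have hSm : MeasurableSet S := MeasurableSet.iUnion fun i => hAm i
  have hφ_meas : Measurable φ :=
    Finset.measurable_sum _ fun i _ => measurable_const.indicator (hAm i)
  have hφval : ∀ i, ∀ x ∈ A i, φ x = z i := by
    intro i x hx
    have h0 : φ x = ∑ j, Set.indicator (A j) (fun _ => z j) x := rfl
    rw [h0, Finset.sum_eq_single i]
    · simp [Set.indicator_of_mem hx]
    · intro j _ hj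
      have hxj : x ∉ A j := fun hxj => Set.disjoint_left.mp (hdisj hj) hxj hx
      simp [Set.indicator_of_notMem hxj]
    · simp
  -- boundedness of φ
  have hφbd : ∀ x, ‖φ x‖ ≤ ∑ i, |z i| := by
    intro x
    rw [Real.norm_eq_abs]
    refine (Finset.abs_sum_le_sum_abs _ _).trans (Finset.sum_le_sum fun i _ => ?_)
    by_cases hx : x ∈ A i
    · simp [Set.indicator_of_mem hx]
    · simp [Set.indicator_of_notMem hx, abs_nonneg]
  have hφint : ∀ (ν : Measure (EuclideanSpace ℝ (Fin k))), IsFiniteMeasure ν →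
      Integrable φ ν := by
    intro ν hν
    exact Integrable.mono' (integrable_const (∑ i, |z i|))
      hφ_meas.aestronglyMeasurable (Filter.Eventually.of_forall hφbd)
  -- value of ∫ φ dν
  have hφint_val : ∀ (ν : Measure (EuclideanSpace ℝ (Fin k))), IsFiniteMeasure ν →
      ∫ x, φ x ∂ν = ∑ i, z i * (ν (A i)).toReal := by
    intro ν hν
    rw [hφdef]
    rw [integral_finset_sum _ (fun i _ => (integrable_const (z i)).indicator (hAm i))]
    refine Finset.sum_congr rfl fun i _ => ?_
    rw [integral_indicator_const _ (hAm i)]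
    simp [mul_comm, Measure.real]
  rw [WpCost]
  refine le_iInf fun π => le_iInf fun hπ => ?_
  obtain ⟨h1, h2⟩ := hπ
  set μ₁ : Measure (EuclideanSpace ℝ (Fin k)) :=
    (∑ i, μi i) + ENNReal.ofReal ε • νp with hμ₁
  set μ₂ : Measure (EuclideanSpace ℝ (Fin k)) :=
    (∑ i, μi i) + ENNReal.ofReal ε • νm with hμ₂
  have hμ₁fin : IsFiniteMeasure μ₁ := by
    constructor
    rw [hμ₁]
    simp only [Measure.add_apply, Measure.smul_apply, Measure.coe_finset_sum,
      Finset.sum_apply, smul_eq_mul]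
    refine ENNReal.add_lt_top.mpr ⟨?_, ?_⟩
    · exact ENNReal.sum_lt_top.mpr fun i _ => measure_lt_top _ _
    · exact ENNReal.mul_lt_top ofReal_lt_top (measure_lt_top _ _)
  have hμ₂fin : IsFiniteMeasure μ₂ := by
    constructor
    rw [hμ₂]
    simp only [Measure.add_apply, Measure.smul_apply, Measure.coe_finset_sum,
      Finset.sum_apply, smul_eq_mul]
    refine ENNReal.add_lt_top.mpr ⟨?_, ?_⟩
    · exact ENNReal.sum_lt_top.mpr fun i _ => measure_lt_top _ _
    · exact ENNReal.mul_lt_top ofReal_lt_top (measure_lt_top _ _)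
  have hπfin : IsFiniteMeasure π := by
    constructor
    have h : π.map Prod.fst Set.univ = μ₁ Set.univ := by rw [h1]
    rw [Measure.map_apply measurable_fst MeasurableSet.univ] at h
    simp only [Set.preimage_univ] at h
    rw [h]
    exact hμ₁fin.measure_univ_lt_top
  have h0 : ∀ i, μi i Sᶜ = 0 := fun i =>
    le_antisymm (le_trans (measure_mono (Set.compl_subset_compl.mpr
      (Set.subset_iUnion A i))) (hμsupp i).le) zero_le
  have hμ₁S : μ₁ Sᶜ = 0 := by
    rw [hμ₁]
    simp only [Measure.add_apply, Measure.smul_apply, Measure.coe_finset_sum,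
      Finset.sum_apply, smul_eq_mul]
    simp [h0, hνp]
  have hμ₂S : μ₂ Sᶜ = 0 := by
    rw [hμ₂]
    simp only [Measure.add_apply, Measure.smul_apply, Measure.coe_finset_sum,
      Finset.sum_apply, smul_eq_mul]
    simp [h0, hνm]
  have hae1 : ∀ᵐ q : EuclideanSpace ℝ (Fin k) × EuclideanSpace ℝ (Fin k) ∂π, q.1 ∈ S := by
    rw [MeasureTheory.ae_iff]
    have h : {q : EuclideanSpace ℝ (Fin k) × EuclideanSpace ℝ (Fin k) | ¬ q.1 ∈ S}
        = Prod.fst ⁻¹' Sᶜ := rfl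
    rw [h, ← Measure.map_apply measurable_fst hSm.compl, h1, hμ₁S]
  have hae2 : ∀ᵐ q : EuclideanSpace ℝ (Fin k) × EuclideanSpace ℝ (Fin k) ∂π, q.2 ∈ S := by
    rw [MeasureTheory.ae_iff]
    have h : {q : EuclideanSpace ℝ (Fin k) × EuclideanSpace ℝ (Fin k) | ¬ q.2 ∈ S}
        = Prod.snd ⁻¹' Sᶜ := rfl
    rw [h, ← Measure.map_apply measurable_snd hSm.compl, h2, hμ₂S]
  -- the dual function difference
  set g : EuclideanSpace ℝ (Fin k) × EuclideanSpace ℝ (Fin k) → ℝ :=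
    fun q => φ q.1 - φ q.2 with hgdef
  have hgint1 : Integrable (fun q : EuclideanSpace ℝ (Fin k) × EuclideanSpace ℝ (Fin k) =>
      φ q.1) π :=
    Integrable.mono' (integrable_const (∑ i, |z i|))
      (hφ_meas.comp measurable_fst).aestronglyMeasurable
      (Filter.Eventually.of_forall fun q => hφbd q.1)
  have hgint2 : Integrable (fun q : EuclideanSpace ℝ (Fin k) × EuclideanSpace ℝ (Fin k) =>
      φ q.2) π :=
    Integrable.mono' (integrable_const (∑ i, |z i|))
      (hφ_meas.comp measurable_snd).aestronglyMeasurable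
      (Filter.Eventually.of_forall fun q => hφbd q.2)
  have hgint : Integrable g π := hgint1.sub hgint2
  -- pointwise bound a.e.
  have hptwise : ∀ᵐ q : EuclideanSpace ℝ (Fin k) × EuclideanSpace ℝ (Fin k) ∂π,
      ENNReal.ofReal (g q) ≤ ENNReal.ofReal (dist q.1 q.2 ^ p) := by
    filter_upwards [hae1, hae2] with q hq1 hq2
    rw [hSdef] at hq1 hq2
    obtain ⟨_, ⟨i, rfl⟩, hi⟩ := hq1
    obtain ⟨_, ⟨j, rfl⟩, hj⟩ := hq2
    have hgq : g q = z i - z j := by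
      show φ q.1 - φ q.2 = z i - z j
      rw [hφval i q.1 hi, hφval j q.2 hj]
    rw [hgq]
    rcases le_or_gt (z i - z j) 0 with h | h
    · simp [ENNReal.ofReal_of_nonpos h]
    · apply ENNReal.ofReal_le_ofReal
      refine (hz i j).trans ?_
      exact Real.rpow_le_rpow (setDist_nonneg' hi hj) (setDist_le hi hj)
        (le_trans zero_le_one hp)
  -- compute ∫ g dπ
  have hcalc : ∫ q, g q ∂π = ε * ∑ i, z i * nub i := by
    rw [hgdef]
    rw [integral_sub hgint1 hgint2]
    have hmap1 : (∫ q : EuclideanSpace ℝ (Fin k) × EuclideanSpace ℝ (Fin k), φ q.1 ∂π)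
        = ∫ x, φ x ∂μ₁ := by
      rw [← h1, integral_map measurable_fst.aemeasurable hφ_meas.aestronglyMeasurable]
    have hmap2 : (∫ q : EuclideanSpace ℝ (Fin k) × EuclideanSpace ℝ (Fin k), φ q.2 ∂π)
        = ∫ x, φ x ∂μ₂ := by
      rw [← h2, integral_map measurable_snd.aemeasurable hφ_meas.aestronglyMeasurable]
    rw [hmap1, hmap2, hμ₁, hμ₂]
    have hintsum : Integrable φ (∑ i, μi i) := by
      refine hφint _ ?_
      constructor
      simp only [Measure.coe_finset_sum, Finset.sum_apply]
      exact ENNReal.sum_lt_top.mpr fun i _ => measure_lt_top _ _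
    have hintp : Integrable φ (ENNReal.ofReal ε • νp) := by
      refine hφint _ ?_
      constructor
      simp only [Measure.smul_apply, smul_eq_mul]
      exact ENNReal.mul_lt_top ofReal_lt_top (measure_lt_top _ _)
    have hintm : Integrable φ (ENNReal.ofReal ε • νm) := by
      refine hφint _ ?_
      constructor
      simp only [Measure.smul_apply, smul_eq_mul]
      exact ENNReal.mul_lt_top ofReal_lt_top (measure_lt_top _ _)
    rw [integral_add_measure hintsum hintp, integral_add_measure hintsum hintm]
    rw [integral_smul_measure, integral_smul_measure]
    rw [ENNReal.toReal_ofReal hε.le]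
    rw [hφint_val νp inferInstance, hφint_val νm inferInstance]
    have hr : ∑ i, z i * nub i
        = (∑ i, z i * (νp (A i)).toReal) - ∑ i, z i * (νm (A i)).toReal := by
      rw [← Finset.sum_sub_distrib]
      exact Finset.sum_congr rfl fun i _ => by rw [hnub i]; ring
    rw [hr]
    simp only [smul_eq_mul]
    ring
  -- put it together
  calc ENNReal.ofReal (ε * ∑ i, z i * nub i)
      = ENNReal.ofReal (∫ q, g q ∂π) := by rw [hcalc]
    _ ≤ ∫⁻ q, ENNReal.ofReal (g q) ∂π := by
        calc ENNReal.ofReal (∫ q, g q ∂π)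
            ≤ ENNReal.ofReal (∫ q, max (g q) 0 ∂π) :=
              ENNReal.ofReal_le_ofReal
                (integral_mono hgint hgint.pos_part (fun q => le_max_left _ _))
          _ = ∫⁻ q, ENNReal.ofReal (max (g q) 0) ∂π :=
              ofReal_integral_eq_lintegral_ofReal hgint.pos_part
                (Filter.Eventually.of_forall fun q => le_max_right _ _)
          _ = ∫⁻ q, ENNReal.ofReal (g q) ∂π := by
              congr 1
              funext q
              rcases le_total (g q) 0 with h | h
              · simp [max_eq_right h, ENNReal.ofReal_of_nonpos h]
              · simp [max_eq_left h]
    _ ≤ ∫⁻ q, ENNReal.ofReal (dist q.1 q.2 ^ p) ∂π := lintegral_mono_ae hptwise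
end

section
/- Teleportation lower bound: Under Assumption 1 (μ = Σ μ_j with disjoint supports A_j, ν neutral supported in supp(μ)), liminf_{ε→0} ε^{-1/p} W_p(μ + εν₊, μ + εν₋) ≥ ‖ν‖_μ^{1/p}, where ‖ν‖_μ is the optimal transport cost of the charges ν̄_i = ν(A_i) on the graph with vertex distances |Ē|_{ij} given by the geodesic distance induced by edge lengths dist(A_i, A_j)^p. -/
open MeasureTheory ENNReal NNReal

/-- Shortest-path distance induced on `Fin m` by edge weights `w`. -/
noncomputable def geodist {m : ℕ} (w : Fin m → Fin m → ℝ) (i j : Fin m) : ℝ :=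
  sInf {c : ℝ | ∃ n : ℕ, ∃ f : Fin (n + 1) → Fin m, f 0 = i ∧ f (Fin.last n) = j ∧
    c = ∑ l : Fin n, w (f l.castSucc) (f l.succ)}


section Geo

variable {m : ℕ}

def geoset (w : Fin m → Fin m → ℝ) (i j : Fin m) : Set ℝ :=
  {c : ℝ | ∃ n : ℕ, ∃ f : Fin (n + 1) → Fin m, f 0 = i ∧ f (Fin.last n) = j ∧
    c = ∑ l : Fin n, w (f l.castSucc) (f l.succ)}

lemma geodist_eq (w : Fin m → Fin m → ℝ) (i j : Fin m) :
    geodist w i j = sInf (geoset w i j) := rfl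

lemma geoset_nonneg (w : Fin m → Fin m → ℝ) (hw0 : ∀ i j, 0 ≤ w i j) (i j : Fin m) :
    ∀ c ∈ geoset w i j, 0 ≤ c := by
  rintro c ⟨n, f, -, -, rfl⟩
  exact Finset.sum_nonneg fun l _ => hw0 _ _

lemma geoset_bddBelow (w : Fin m → Fin m → ℝ) (hw0 : ∀ i j, 0 ≤ w i j) (i j : Fin m) :
    BddBelow (geoset w i j) :=
  ⟨0, fun c hc => geoset_nonneg w hw0 i j c hc⟩

lemma geoset_mem (w : Fin m → Fin m → ℝ) (i j : Fin m) : w i j ∈ geoset w i j := by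
  refine ⟨1, ![i, j], rfl, rfl, ?_⟩
  rw [Fin.sum_univ_one]
  rfl

lemma geodist_nonneg (w : Fin m → Fin m → ℝ) (hw0 : ∀ i j, 0 ≤ w i j) (i j : Fin m) :
    0 ≤ geodist w i j :=
  le_csInf ⟨w i j, geoset_mem w i j⟩ (geoset_nonneg w hw0 i j)

lemma geodist_self (w : Fin m → Fin m → ℝ) (hw0 : ∀ i j, 0 ≤ w i j) (i : Fin m) :
    geodist w i i = 0 := by
  refine le_antisymm (csInf_le (geoset_bddBelow w hw0 i i) ⟨0, fun _ => i, rfl, rfl, by simp⟩)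
    (geodist_nonneg w hw0 i i)

lemma geodist_le (w : Fin m → Fin m → ℝ) (hw0 : ∀ i j, 0 ≤ w i j) (i j : Fin m) :
    geodist w i j ≤ w i j :=
  csInf_le (geoset_bddBelow w hw0 i j) (geoset_mem w i j)

lemma geodist_triangle (w : Fin m → Fin m → ℝ) (hw0 : ∀ i j, 0 ≤ w i j) (i b j : Fin m) :
    geodist w i j ≤ geodist w i b + geodist w b j := by
  have key : ∀ c1 ∈ geoset w i b, ∀ c2 ∈ geoset w b j, geodist w i j ≤ c1 + c2 := by
    rintro c1 ⟨n1, f1, hf10, hf1l, rfl⟩ c2 ⟨n2, f2, hf20, hf2l, rfl⟩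
    set g : ℕ → Fin m := fun l => if h : l ≤ n1 then f1 ⟨l, by omega⟩
      else if h2 : l ≤ n1 + n2 then f2 ⟨l - n1, by omega⟩ else i with hg
    have hgmid : ∀ l : Fin (n2 + 1), g (n1 + (l : ℕ)) = f2 l := by
      intro l
      by_cases h0 : (l : ℕ) = 0
      · have hl0 : l = 0 := Fin.ext h0
        subst hl0
        simp only [Fin.val_zero, Nat.add_zero]
        have e1 : g n1 = f1 ⟨n1, by omega⟩ := by simp [hg]
        rw [e1, hf20, ← hf1l]; rfl
      · have h1 : ¬ (n1 + (l : ℕ) ≤ n1) := by omega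
        have h2 : n1 + (l : ℕ) ≤ n1 + n2 := by omega
        simp only [hg, h1, h2, dif_neg, dif_pos, not_false_iff]
        congr 1
        all_goals exact Fin.ext (by simp)
    rw [geodist_eq]
    refine csInf_le (geoset_bddBelow w hw0 i j) ?_
    refine ⟨n1 + n2, fun l => g (l : ℕ), ?_, ?_, ?_⟩
    · show g 0 = i
      have : (0 : ℕ) ≤ n1 := by omega
      simp only [hg, this, dif_pos]
      rw [← hf10]; rfl
    · show g ((Fin.last (n1 + n2) : Fin (n1 + n2 + 1)) : ℕ) = j
      have : ((Fin.last (n1 + n2) : Fin (n1 + n2 + 1)) : ℕ) = n1 + n2 := rfl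
      rw [this]
      have := hgmid (Fin.last n2)
      have e : ((Fin.last n2 : Fin (n2+1)) : ℕ) = n2 := rfl
      rw [e] at this
      rw [this, hf2l]
    · have hsum : ∑ l : Fin (n1 + n2), w (g ((l.castSucc : Fin (n1+n2+1)) : ℕ)) (g ((l.succ : Fin (n1+n2+1)) : ℕ))
          = ∑ l ∈ Finset.range (n1 + n2), w (g l) (g (l + 1)) := by
        rw [← Fin.sum_univ_eq_sum_range (fun l => w (g l) (g (l + 1)))]
        rfl
      rw [hsum, Finset.sum_range_add]
      have e1 : ∑ l ∈ Finset.range n1, w (g l) (g (l + 1))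
          = ∑ l : Fin n1, w (f1 l.castSucc) (f1 l.succ) := by
        rw [← Fin.sum_univ_eq_sum_range (fun l => w (g l) (g (l + 1)))]
        refine Finset.sum_congr rfl fun l _ => ?_
        have h1 : ((l : ℕ)) ≤ n1 := by omega
        have h2 : ((l : ℕ) + 1) ≤ n1 := by omega
        simp only [hg, h1, h2, dif_pos]
        rfl
      have e2 : ∑ l ∈ Finset.range n2, w (g (n1 + l)) (g (n1 + l + 1))
          = ∑ l : Fin n2, w (f2 l.castSucc) (f2 l.succ) := by
        rw [← Fin.sum_univ_eq_sum_range (fun l => w (g (n1 + l)) (g (n1 + l + 1)))]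
        refine Finset.sum_congr rfl fun l _ => ?_
        have h1 := hgmid l.castSucc
        have h2 := hgmid l.succ
        have e1' : ((l.castSucc : Fin (n2+1)) : ℕ) = (l : ℕ) := rfl
        have e2' : ((l.succ : Fin (n2+1)) : ℕ) = (l : ℕ) + 1 := rfl
        rw [e1'] at h1
        rw [e2'] at h2
        rw [h1, Nat.add_assoc, h2]
      rw [e1, e2]
  have H1 : geodist w i j - geodist w b j ≤ geodist w i b := by
    rw [geodist_eq w i b]
    refine le_csInf ⟨w i b, geoset_mem w i b⟩ (fun c1 hc1 => ?_)
    have H2 : geodist w i j - c1 ≤ geodist w b j := by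
      rw [geodist_eq w b j]
      refine le_csInf ⟨w b j, geoset_mem w b j⟩ (fun c2 hc2 => ?_)
      linarith [key c1 hc1 c2 hc2]
    linarith
  linarith

end Geo

section Flow

variable {m : ℕ}

def Rsum (lam : Fin m → Fin m → ℝ) (v : Fin m) : ℝ := ∑ y, lam v y
def Csum (lam : Fin m → Fin m → ℝ) (v : Fin m) : ℝ := ∑ x, lam x v
def fcost (g lam : Fin m → Fin m → ℝ) : ℝ := ∑ i, ∑ j, lam i j * g i j

lemma Rsum_nonneg {lam : Fin m → Fin m → ℝ} (h0 : ∀ i j, 0 ≤ lam i j) (v : Fin m) :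
    0 ≤ Rsum lam v := Finset.sum_nonneg fun _ _ => h0 _ _

lemma Csum_nonneg {lam : Fin m → Fin m → ℝ} (h0 : ∀ i j, 0 ≤ lam i j) (v : Fin m) :
    0 ≤ Csum lam v := Finset.sum_nonneg fun _ _ => h0 _ _

lemma sum_split1 (b : Fin m) (f base : Fin m → ℝ) (c : ℝ)
    (h : ∀ y, f y = base y + (if y = b then c else 0)) :
    ∑ y, f y = (∑ y, base y) + c := by
  simp only [h, Finset.sum_add_distrib, Finset.sum_ite_eq', Finset.mem_univ, if_true]

lemma sum_split2 (b v : Fin m) (f base : Fin m → ℝ) (c d : ℝ)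
    (h : ∀ y, f y = base y + ((if y = b then c else 0) + (if y = v then d else 0))) :
    ∑ y, f y = (∑ y, base y) + (c + d) := by
  simp only [h, Finset.sum_add_distrib, Finset.sum_ite_eq', Finset.mem_univ, if_true]

lemma elimLE (g : Fin m → Fin m → ℝ)
    (hgt : ∀ x b y, g x y ≤ g x b + g b y) (b : Fin m)
    (lam : Fin m → Fin m → ℝ) (h0 : ∀ i j, 0 ≤ lam i j) (hd : ∀ i, lam i i = 0)
    (hg0 : ∀ i j, 0 ≤ g i j)
    (hIO : Csum lam b ≤ Rsum lam b) :
    ∃ lam' : Fin m → Fin m → ℝ, (∀ i j, 0 ≤ lam' i j) ∧ (∀ i, lam' i i = 0) ∧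
      (∀ v, Rsum lam' v - Csum lam' v = Rsum lam v - Csum lam v) ∧
      fcost g lam' ≤ fcost g lam ∧
      Csum lam' b = 0 ∧
      (∀ v, Csum lam' v ≤ Csum lam v ∧ Rsum lam' v ≤ Rsum lam v) := by
  by_cases hO : Rsum lam b = 0
  · have hC0 : Csum lam b = 0 :=
      le_antisymm (hIO.trans hO.le) (Csum_nonneg h0 b)
    exact ⟨lam, h0, hd, fun v => rfl, le_rfl, hC0, fun v => ⟨le_rfl, le_rfl⟩⟩
  · set I := Csum lam b with hI
    set O := Rsum lam b with hOdef
    have hI0 : 0 ≤ I := Csum_nonneg h0 b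
    have hOpos : 0 < O := lt_of_le_of_ne (Rsum_nonneg h0 b) (Ne.symm hO)
    have hOne : O ≠ 0 := hOpos.ne'
    set q : ℝ := (O - I) / O with hq
    have hq0 : 0 ≤ q := div_nonneg (by linarith) hOpos.le
    have hOsum : (∑ y : Fin m, lam b y) = O := rfl
    have hIsum : (∑ x : Fin m, lam x b) = I := rfl
    set lam' : Fin m → Fin m → ℝ := fun x y =>
      if x = b then (if y = b then 0 else lam b y * q)
      else if y = b then 0 else if x = y then 0
      else lam x y + lam x b * lam b y / O with hlam'
    have h0' : ∀ i j, 0 ≤ lam' i j := by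
      intro x y
      simp only [hlam']
      by_cases hx : x = b
      · rw [if_pos hx]
        by_cases hy : y = b
        · rw [if_pos hy]
        · rw [if_neg hy]
          exact mul_nonneg (h0 _ _) hq0
      · rw [if_neg hx]
        by_cases hy : y = b
        · rw [if_pos hy]
        · rw [if_neg hy]
          by_cases hxy : x = y
          · rw [if_pos hxy]
          · rw [if_neg hxy]
            exact add_nonneg (h0 _ _) (div_nonneg (mul_nonneg (h0 _ _) (h0 _ _)) hOpos.le)
    have hd' : ∀ i, lam' i i = 0 := by
      intro i
      by_cases hi : i = b <;> simp [hlam', hi]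
    have hC'b : Csum lam' b = 0 := by
      unfold Csum
      refine Finset.sum_eq_zero fun x _ => ?_
      by_cases hx : x = b <;> simp [hlam', hx]
    have hR'b : Rsum lam' b = O - I := by
      have hpt : ∀ y, lam' b y = lam b y * q := by
        intro y
        by_cases hy : y = b <;> simp [hlam', hy, hd b]
      unfold Rsum
      rw [Finset.sum_congr rfl fun y _ => hpt y, ← Finset.sum_mul, hOsum, hq]
      field_simp
    have hR'v : ∀ v, v ≠ b → Rsum lam' v = Rsum lam v - lam v b * lam b v / O := by
      intro v hv
      have hsplit := sum_split2 b v (lam' v)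
        (fun y => lam v y + lam v b / O * lam b y)
        (-(lam v b)) (-(lam v b * lam b v / O))
        (by
          intro y
          by_cases hy : y = b
          · simp only [hlam', hy, if_neg hv, eq_self_iff_true, if_true, if_neg (Ne.symm hv), hd b]
            ring
          · by_cases hyv : y = v
            · simp only [hlam', hyv, if_neg hv, eq_self_iff_true, if_true, hd v]
              ring
            · simp only [hlam', if_neg hv, if_neg hy, if_neg (Ne.symm hyv), if_neg hyv]
              ring)
      show Rsum lam' v = _
      unfold Rsum at hsplit ⊢
      rw [hsplit, Finset.sum_add_distrib, ← Finset.mul_sum, hOsum]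
      field_simp
      ring
    have hC'v : ∀ v, v ≠ b → Csum lam' v = Csum lam v - lam v b * lam b v / O := by
      intro v hv
      have hsplit := sum_split2 b v (fun x => lam' x v)
        (fun x => lam x v + lam b v / O * lam x b)
        (lam b v * q - lam b v) (-(lam b v / O * lam v b))
        (by
          intro x
          by_cases hx : x = b
          · simp only [hlam', hx, eq_self_iff_true, if_true, if_neg hv, if_neg (Ne.symm hv), hd b]
            ring
          · by_cases hxv : x = v
            · simp only [hlam', hxv, if_neg hv, eq_self_iff_true, if_true, hd v]
              ring
            · simp only [hlam', if_neg hx, if_neg hv, if_neg hxv]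
              ring)
      show Csum lam' v = _
      unfold Csum at hsplit ⊢
      rw [hsplit, Finset.sum_add_distrib, ← Finset.mul_sum, hIsum, hq]
      field_simp
      ring
    refine ⟨lam', h0', hd', ?_, ?_, hC'b, ?_⟩
    · intro v
      by_cases hv : v = b
      · rw [hv, hR'b, hC'b, ← hI, ← hOdef]
        ring
      · rw [hR'v v hv, hC'v v hv]
        ring
    · -- cost
      set P : ℝ := ∑ y, lam b y * g b y with hP
      set B : Fin m → Fin m → ℝ := fun x y =>
        if x = b then lam b y * q * g b y
        else if y = b then 0
        else lam x y * g x y + lam x b * lam b y / O * (g x b + g b y) with hB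
      have hBle : ∀ x y, lam' x y * g x y ≤ B x y := by
        intro x y
        by_cases hx : x = b
        · by_cases hy : y = b
          · simp only [hlam', hB, hx, if_pos rfl, hy, hd b]
            simp
          · simp only [hlam', hB, hx, eq_self_iff_true, if_true, if_neg hy]
            exact le_rfl
        · by_cases hy : y = b
          · simp only [hlam', hB, if_neg hx, if_pos hy]
            simp
          · by_cases hxy : x = y
            · simp only [hlam', hB, if_neg hx, if_neg hy, if_pos hxy]
              have hco : 0 ≤ lam x b * lam b y / O :=
                div_nonneg (mul_nonneg (h0 _ _) (h0 _ _)) hOpos.le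
              simp only [zero_mul]
              exact add_nonneg (mul_nonneg (h0 _ _) (hg0 _ _))
                (mul_nonneg hco (add_nonneg (hg0 _ _) (hg0 _ _)))
            · simp only [hlam', hB, if_neg hx, if_neg hy, if_neg hxy]
              have hco : 0 ≤ lam x b * lam b y / O :=
                div_nonneg (mul_nonneg (h0 _ _) (h0 _ _)) hOpos.le
              have h1 := mul_le_mul_of_nonneg_left (hgt x b y) hco
              nlinarith [h1]
      have hFb : ∑ y, B b y = P * q := by
        have hpt : ∀ y, B b y = lam b y * g b y * q := by
          intro y
          simp only [hB, if_pos rfl]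
          ring
        rw [Finset.sum_congr rfl fun y _ => hpt y, ← Finset.sum_mul, ← hP]
      have hFx : ∀ x, x ≠ b → ∑ y, B x y = (∑ y, lam x y * g x y) + lam x b * (P / O) := by
        intro x hx
        have hsplit := sum_split1 b (B x)
          (fun y => lam x y * g x y + lam x b / O * (lam b y * (g x b + g b y)))
          (-(lam x b * g x b))
          (by
            intro y
            by_cases hy : y = b
            · simp only [hB, if_neg hx, hy, eq_self_iff_true, if_true, hd b]
              ring
            · simp only [hB, if_neg hx, if_neg hy]
              ring)
        rw [hsplit, Finset.sum_add_distrib, ← Finset.mul_sum]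
        have hexp : ∑ y, lam b y * (g x b + g b y) = O * g x b + P := by
          rw [Finset.sum_congr rfl (fun y _ => mul_add (lam b y) (g x b) (g b y)),
            Finset.sum_add_distrib, ← Finset.sum_mul, hOsum, ← hP]
        rw [hexp]
        field_simp
        ring
      have hBsum : ∑ x, ∑ y, B x y = fcost g lam := by
        have hsplit : (∑ x, ∑ y, B x y) =
            (∑ x, ((∑ y, lam x y * g x y) + lam x b * (P / O))) +
              (P * q - ((∑ y, lam b y * g b y) + lam b b * (P / O))) :=
          sum_split1 b _ _ _
          (by
            intro x
            by_cases hx : x = b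
            · subst hx
              rw [hFb]
              simp
            · rw [hFx x hx]
              simp [hx])
        rw [hsplit, Finset.sum_add_distrib, ← Finset.sum_mul, hIsum, ← hP, hd b, hq]
        unfold fcost
        field_simp
        ring
      calc fcost g lam' ≤ ∑ x, ∑ y, B x y :=
            Finset.sum_le_sum fun x _ => Finset.sum_le_sum fun y _ => hBle x y
        _ = fcost g lam := hBsum
    · intro v
      by_cases hv : v = b
      · rw [hv]
        constructor
        · rw [hC'b]
          exact Csum_nonneg h0 b
        · rw [hR'b, ← hOdef]
          linarith
      · have hs : 0 ≤ lam v b * lam b v / O :=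
          div_nonneg (mul_nonneg (h0 _ _) (h0 _ _)) hOpos.le
        constructor
        · rw [hC'v v hv]
          linarith
        · rw [hR'v v hv]
          linarith


lemma fcost_transpose (g lam : Fin m → Fin m → ℝ) :
    fcost g (fun i j => lam j i) = fcost (fun i j => g j i) lam := by
  unfold fcost
  exact Finset.sum_comm

lemma elim (g : Fin m → Fin m → ℝ)
    (hgt : ∀ x b y, g x y ≤ g x b + g b y) (hg0 : ∀ i j, 0 ≤ g i j) (b : Fin m)
    (lam : Fin m → Fin m → ℝ) (h0 : ∀ i j, 0 ≤ lam i j) (hd : ∀ i, lam i i = 0) :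
    ∃ lam' : Fin m → Fin m → ℝ, (∀ i j, 0 ≤ lam' i j) ∧ (∀ i, lam' i i = 0) ∧
      (∀ v, Rsum lam' v - Csum lam' v = Rsum lam v - Csum lam v) ∧
      fcost g lam' ≤ fcost g lam ∧
      (Csum lam' b = 0 ∨ Rsum lam' b = 0) ∧
      (∀ v, Csum lam' v ≤ Csum lam v ∧ Rsum lam' v ≤ Rsum lam v) := by
  by_cases hIO : Csum lam b ≤ Rsum lam b
  · obtain ⟨lam', a1, a2, a3, a4, a5, a6⟩ := elimLE g hgt b lam h0 hd hg0 hIO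
    exact ⟨lam', a1, a2, a3, a4, Or.inl a5, a6⟩
  · set gT : Fin m → Fin m → ℝ := fun i j => g j i with hgT
    set lamT : Fin m → Fin m → ℝ := fun i j => lam j i with hlamT
    have hRT : ∀ v, Rsum lamT v = Csum lam v := fun v => rfl
    have hCT : ∀ v, Csum lamT v = Rsum lam v := fun v => rfl
    obtain ⟨lam2, a1, a2, a3, a4, a5, a6⟩ := elimLE gT
      (fun x c y => by have := hgt y c x; simp only [hgT]; linarith) b lamT
      (fun i j => h0 j i) (fun i => hd i) (fun i j => hg0 j i)
      (by rw [hRT, hCT]; linarith)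
    refine ⟨fun i j => lam2 j i, fun i j => a1 j i, a2, ?_, ?_, ?_, ?_⟩
    · intro v
      have h3 := a3 v
      have e1 : Rsum (fun i j => lam2 j i) v = Csum lam2 v := rfl
      have e2 : Csum (fun i j => lam2 j i) v = Rsum lam2 v := rfl
      rw [e1, e2, hRT, hCT] at *
      linarith
    · have e1 : fcost g (fun i j => lam2 j i) = fcost gT lam2 := fcost_transpose g lam2
      have e2 : fcost g lam = fcost gT lamT := by
        unfold fcost
        exact Finset.sum_comm
      rw [e1, e2]
      exact a4
    · right
      exact a5
    · intro v
      have := a6 v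
      have e1 : Rsum (fun i j => lam2 j i) v = Csum lam2 v := rfl
      have e2 : Csum (fun i j => lam2 j i) v = Rsum lam2 v := rfl
      rw [e1, e2]
      rw [hRT, hCT] at this
      exact ⟨this.2, this.1⟩

lemma elim_all (g : Fin m → Fin m → ℝ)
    (hgt : ∀ x b y, g x y ≤ g x b + g b y) (hg0 : ∀ i j, 0 ≤ g i j) :
    ∀ (L : List (Fin m)) (lam : Fin m → Fin m → ℝ),
      (∀ i j, 0 ≤ lam i j) → (∀ i, lam i i = 0) →
    ∃ lam' : Fin m → Fin m → ℝ, (∀ i j, 0 ≤ lam' i j) ∧ (∀ i, lam' i i = 0) ∧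
      (∀ v, Rsum lam' v - Csum lam' v = Rsum lam v - Csum lam v) ∧
      fcost g lam' ≤ fcost g lam ∧
      (∀ b ∈ L, Csum lam' b = 0 ∨ Rsum lam' b = 0) ∧
      (∀ v, Csum lam' v ≤ Csum lam v ∧ Rsum lam' v ≤ Rsum lam v) := by
  intro L
  induction L with
  | nil => exact fun lam h0 hd => ⟨lam, h0, hd, fun v => rfl, le_rfl,
      fun b hb => absurd hb (by simp), fun v => ⟨le_rfl, le_rfl⟩⟩
  | cons b L ih =>
    intro lam h0 hd
    obtain ⟨lam1, b1, b2, b3, b4, b5, b6⟩ := elim g hgt hg0 b lam h0 hd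
    obtain ⟨lam2, c1, c2, c3, c4, c5, c6⟩ := ih lam1 b1 b2
    refine ⟨lam2, c1, c2, fun v => (c3 v).trans (b3 v), c4.trans b4, ?_,
      fun v => ⟨(c6 v).1.trans (b6 v).1, (c6 v).2.trans (b6 v).2⟩⟩
    intro v hv
    rcases List.mem_cons.mp hv with rfl | hv'
    · rcases b5 with h | h
      · left
        exact le_antisymm ((c6 v).1.trans_eq h) (Csum_nonneg c1 v)
      · right
        exact le_antisymm ((c6 v).2.trans_eq h) (Rsum_nonneg c1 v)
    · exact c5 v hv'


lemma flow_bound (g : Fin m → Fin m → ℝ)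
    (hgt : ∀ x b y, g x y ≤ g x b + g b y) (hg0 : ∀ i j, 0 ≤ g i j)
    (nu : Fin m → ℝ) (lam : Fin m → Fin m → ℝ)
    (h0 : ∀ i j, 0 ≤ lam i j) (hd : ∀ i, lam i i = 0)
    (hdiv : ∀ i, Rsum lam i - Csum lam i = nu i) :
    ∃ lamb : Fin m → Fin m → ℝ, (∀ i j, 0 ≤ lamb i j) ∧
      (∀ i, 0 < nu i → ∑ j ∈ Finset.univ.filter (fun j => nu j < 0), lamb i j = nu i) ∧
      (∀ j, nu j < 0 → ∑ i ∈ Finset.univ.filter (fun i => 0 < nu i), lamb i j = -nu j) ∧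
      (∑ i ∈ Finset.univ.filter (fun i => 0 < nu i),
        ∑ j ∈ Finset.univ.filter (fun j => nu j < 0), lamb i j * g i j) ≤ fcost g lam := by
  obtain ⟨lamf, f1, f2, f3, f4, f5, -⟩ :=
    elim_all g hgt hg0 (List.finRange m) lam h0 hd
  have hclean : ∀ b, Csum lamf b = 0 ∨ Rsum lamf b = 0 :=
    fun b => f5 b (List.mem_finRange b)
  have hdivf : ∀ i, Rsum lamf i - Csum lamf i = nu i :=
    fun i => (f3 i).trans (hdiv i)
  have key : ∀ i j, lamf i j ≠ 0 → 0 < nu i ∧ nu j < 0 := by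
    intro i j hne
    have hij : 0 < lamf i j := lt_of_le_of_ne (f1 i j) (Ne.symm hne)
    have hRi : 0 < Rsum lamf i :=
      lt_of_lt_of_le hij (Finset.single_le_sum (fun y _ => f1 i y) (Finset.mem_univ j))
    have hCj : 0 < Csum lamf j :=
      lt_of_lt_of_le hij (Finset.single_le_sum (fun x _ => f1 x j) (Finset.mem_univ i))
    have hCi : Csum lamf i = 0 := by
      rcases hclean i with h | h
      · exact h
      · exact absurd h hRi.ne'
    have hRj : Rsum lamf j = 0 := by
      rcases hclean j with h | h
      · exact absurd h hCj.ne'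
      · exact h
    constructor
    · have := hdivf i
      rw [hCi] at this
      linarith
    · have := hdivf j
      rw [hRj] at this
      linarith
  refine ⟨lamf, f1, ?_, ?_, ?_⟩
  · intro i hi
    have hCi : Csum lamf i = 0 := by
      rcases hclean i with h | h
      · exact h
      · have := hdivf i
        rw [h] at this
        have := Csum_nonneg f1 i
        linarith
    have hfull : ∑ j ∈ Finset.univ.filter (fun j => nu j < 0), lamf i j
        = ∑ j, lamf i j := by
      refine Finset.sum_subset (Finset.filter_subset _ _) ?_
      intro j _ hj
      by_contra hne
      have := (key i j hne).2
      exact hj (Finset.mem_filter.mpr ⟨Finset.mem_univ j, this⟩)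
    rw [hfull]
    have := hdivf i
    rw [hCi] at this
    show Rsum lamf i = nu i
    linarith
  · intro j hj
    have hRj : Rsum lamf j = 0 := by
      rcases hclean j with h | h
      · have := hdivf j
        rw [h] at this
        have := Rsum_nonneg f1 j
        linarith
      · exact h
    have hfull : ∑ i ∈ Finset.univ.filter (fun i => 0 < nu i), lamf i j
        = ∑ i, lamf i j := by
      refine Finset.sum_subset (Finset.filter_subset _ _) ?_
      intro i _ hi
      by_contra hne
      have := (key i j hne).1
      exact hi (Finset.mem_filter.mpr ⟨Finset.mem_univ i, this⟩)
    rw [hfull]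
    have := hdivf j
    rw [hRj] at this
    show Csum lamf j = -nu j
    linarith
  · refine le_trans ?_ f4
    unfold fcost
    refine le_trans (Finset.sum_le_sum fun i _ =>
      Finset.sum_le_sum_of_subset_of_nonneg (Finset.filter_subset _ _)
        (fun j _ _ => mul_nonneg (f1 i j) (hg0 i j))) ?_
    exact Finset.sum_le_sum_of_subset_of_nonneg (Finset.filter_subset _ _)
      (fun i _ _ => Finset.sum_nonneg fun j _ => mul_nonneg (f1 i j) (hg0 i j))

end Flow

lemma wpcost_lower {k : ℕ} (p : ℝ) (hp : 1 < p) {m : ℕ}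
    (A : Fin m → Set (EuclideanSpace ℝ (Fin k)))
    (hcpt : ∀ i, IsCompact (A i)) (hne : ∀ i, (A i).Nonempty)
    (hdisj : Pairwise (Function.onFun Disjoint A))
    (μi : Fin m → Measure (EuclideanSpace ℝ (Fin k)))
    [∀ i, IsFiniteMeasure (μi i)] (hμsupp : ∀ i, μi i (A i)ᶜ = 0)
    (νp νm : Measure (EuclideanSpace ℝ (Fin k)))
    [IsFiniteMeasure νp] [IsFiniteMeasure νm]
    (hνp : νp (⋃ i, A i)ᶜ = 0) (hνm : νm (⋃ i, A i)ᶜ = 0)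
    (nub : Fin m → ℝ) (hnub : ∀ i, nub i = (νp (A i)).toReal - (νm (A i)).toReal)
    (w : Fin m → Fin m → ℝ) (hw : ∀ i j, w i j = setDist (A i) (A j) ^ p)
    (nuMu : ℝ)
    (hnuMu : nuMu = sInf {c : ℝ | ∃ lam : Fin m → Fin m → ℝ,
      (∀ i j, 0 ≤ lam i j) ∧
      (∀ i, 0 < nub i →
        ∑ j ∈ Finset.univ.filter (fun j => nub j < 0), lam i j = nub i) ∧
      (∀ j, nub j < 0 →
        ∑ i ∈ Finset.univ.filter (fun i => 0 < nub i), lam i j = -nub j) ∧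
      c = ∑ i ∈ Finset.univ.filter (fun i => 0 < nub i),
            ∑ j ∈ Finset.univ.filter (fun j => nub j < 0),
              lam i j * geodist w i j})
    (ε : ℝ) (hε : 0 < ε) :
    ENNReal.ofReal (ε * nuMu) ≤
      WpCost p ((∑ i, μi i) + ENNReal.ofReal ε • νp)
        ((∑ i, μi i) + ENNReal.ofReal ε • νm) := by
  have hp0 : (0:ℝ) ≤ p := by linarith
  have hsd0 : ∀ i j, 0 ≤ setDist (A i) (A j) := by
    intro i j
    apply Real.sInf_nonneg
    rintro x ⟨q, -, rfl⟩
    exact dist_nonneg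
  have hw0 : ∀ i j, 0 ≤ w i j := by
    intro i j
    rw [hw]
    exact Real.rpow_nonneg (hsd0 i j) p
  have hAm : ∀ i, MeasurableSet (A i) := fun i => (hcpt i).isClosed.measurableSet
  have hUm : MeasurableSet (⋃ i, A i) := MeasurableSet.iUnion fun i => hAm i
  unfold WpCost
  refine le_iInf fun π => le_iInf fun hπ => ?_
  obtain ⟨h1, h2⟩ := hπ
  have hπuniv : π Set.univ ≠ ⊤ := by
    have e1 : π Set.univ = (π.map Prod.fst) Set.univ := by
      rw [Measure.map_apply measurable_fst MeasurableSet.univ, Set.preimage_univ]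
    rw [e1, h1, Measure.add_apply]
    refine ENNReal.add_ne_top.mpr ⟨?_, ?_⟩
    · rw [Measure.finset_sum_apply]
      exact (ENNReal.sum_lt_top.mpr fun i _ => measure_lt_top _ _).ne
    · rw [Measure.smul_apply, smul_eq_mul]
      exact ENNReal.mul_ne_top ENNReal.ofReal_ne_top (measure_ne_top νp _)
  have hfinππ : ∀ i j, π (A i ×ˢ A j) ≠ ⊤ :=
    fun i j => ne_top_of_le_ne_top hπuniv (measure_mono (Set.subset_univ _))
  have hμU : (∑ i, μi i) ((⋃ i, A i)ᶜ) = 0 := by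
    rw [Measure.finset_sum_apply]
    refine Finset.sum_eq_zero fun i _ => measure_mono_null ?_ (hμsupp i)
    exact Set.compl_subset_compl.mpr (Set.subset_iUnion A i)
  have hfstnull : π (Prod.fst ⁻¹' (⋃ i, A i)ᶜ) = 0 := by
    rw [← Measure.map_apply measurable_fst hUm.compl, h1,
      Measure.add_apply, hμU, Measure.smul_apply, smul_eq_mul, hνp, mul_zero, add_zero]
  have hsndnull : π (Prod.snd ⁻¹' (⋃ i, A i)ᶜ) = 0 := by
    rw [← Measure.map_apply measurable_snd hUm.compl, h2,
      Measure.add_apply, hμU, Measure.smul_apply, smul_eq_mul, hνm, mul_zero, add_zero]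
  have hrow : ∀ i, ∑ j, π (A i ×ˢ A j) = μi i (A i) + ENNReal.ofReal ε * νp (A i) := by
    intro i
    have hdisjj : Pairwise (Function.onFun Disjoint fun j => A i ×ˢ A j) :=
      fun a b hab => Set.disjoint_prod.mpr (Or.inr (hdisj hab))
    have e1 : π (⋃ j, A i ×ˢ A j) = ∑' j, π (A i ×ˢ A j) :=
      measure_iUnion hdisjj fun j => (hAm i).prod (hAm j)
    rw [tsum_fintype] at e1
    have e2 : (⋃ j, A i ×ˢ A j) = A i ×ˢ (⋃ j, A j) := (Set.prod_iUnion).symm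
    have e3 : π (A i ×ˢ (⋃ j, A j)) = π (A i ×ˢ Set.univ) := by
      refine le_antisymm (measure_mono (Set.prod_mono subset_rfl (Set.subset_univ _))) ?_
      calc π (A i ×ˢ Set.univ)
          ≤ π ((A i ×ˢ (⋃ j, A j)) ∪ Prod.snd ⁻¹' (⋃ j, A j)ᶜ) := by
            refine measure_mono ?_
            rintro ⟨a, c⟩ ⟨ha, -⟩
            by_cases hc : c ∈ ⋃ j, A j
            · exact Or.inl ⟨ha, hc⟩
            · exact Or.inr hc
        _ ≤ π (A i ×ˢ (⋃ j, A j)) + π (Prod.snd ⁻¹' (⋃ j, A j)ᶜ) := measure_union_le _ _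
        _ = π (A i ×ˢ (⋃ j, A j)) := by rw [hsndnull, add_zero]
    have e4 : π (A i ×ˢ Set.univ) = μi i (A i) + ENNReal.ofReal ε * νp (A i) := by
      rw [Set.prod_univ, ← Measure.map_apply measurable_fst (hAm i), h1,
        Measure.add_apply, Measure.smul_apply, smul_eq_mul]
      congr 1
      rw [Measure.finset_sum_apply]
      refine Finset.sum_eq_single i
        (fun j _ hji => measure_mono_null
          (fun x hx => Set.disjoint_right.mp (hdisj hji) hx) (hμsupp j))
        (fun h => absurd (Finset.mem_univ i) h)
    rw [← e1, e2, e3, e4]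
  have hcol : ∀ i, ∑ j, π (A j ×ˢ A i) = μi i (A i) + ENNReal.ofReal ε * νm (A i) := by
    intro i
    have hdisjj : Pairwise (Function.onFun Disjoint fun j => A j ×ˢ A i) :=
      fun a b hab => Set.disjoint_prod.mpr (Or.inl (hdisj hab))
    have e1 : π (⋃ j, A j ×ˢ A i) = ∑' j, π (A j ×ˢ A i) :=
      measure_iUnion hdisjj fun j => (hAm j).prod (hAm i)
    rw [tsum_fintype] at e1
    have e2 : (⋃ j, A j ×ˢ A i) = (⋃ j, A j) ×ˢ A i := (Set.iUnion_prod_const).symm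
    have e3 : π ((⋃ j, A j) ×ˢ A i) = π (Set.univ ×ˢ A i) := by
      refine le_antisymm (measure_mono (Set.prod_mono (Set.subset_univ _) subset_rfl)) ?_
      calc π (Set.univ ×ˢ A i)
          ≤ π (((⋃ j, A j) ×ˢ A i) ∪ Prod.fst ⁻¹' (⋃ j, A j)ᶜ) := by
            refine measure_mono ?_
            rintro ⟨a, c⟩ ⟨-, hc⟩
            by_cases ha : a ∈ ⋃ j, A j
            · exact Or.inl ⟨ha, hc⟩
            · exact Or.inr ha
        _ ≤ π ((⋃ j, A j) ×ˢ A i) + π (Prod.fst ⁻¹' (⋃ j, A j)ᶜ) := measure_union_le _ _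
        _ = π ((⋃ j, A j) ×ˢ A i) := by rw [hfstnull, add_zero]
    have e4 : π (Set.univ ×ˢ A i) = μi i (A i) + ENNReal.ofReal ε * νm (A i) := by
      rw [Set.univ_prod, ← Measure.map_apply measurable_snd (hAm i), h2,
        Measure.add_apply, Measure.smul_apply, smul_eq_mul]
      congr 1
      rw [Measure.finset_sum_apply]
      refine Finset.sum_eq_single i
        (fun j _ hji => measure_mono_null
          (fun x hx => Set.disjoint_right.mp (hdisj hji) hx) (hμsupp j))
        (fun h => absurd (Finset.mem_univ i) h)
    rw [← e1, e2, e3, e4]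
  set F : (EuclideanSpace ℝ (Fin k)) × (EuclideanSpace ℝ (Fin k)) → ℝ≥0∞ :=
    fun z => ENNReal.ofReal (dist z.1 z.2 ^ p) with hF
  have hFm : Measurable F :=
    (ENNReal.continuous_ofReal.comp
      (continuous_dist.rpow_const fun x => Or.inr hp0)).measurable
  have hptw : ∀ i j, ENNReal.ofReal (w i j) * π (A i ×ˢ A j)
      ≤ ∫⁻ z in A i ×ˢ A j, F z ∂π := by
    intro i j
    refine le_trans (le_of_eq (setLIntegral_const _ _).symm) (setLIntegral_mono hFm ?_)
    rintro ⟨z1, z2⟩ ⟨hz1, hz2⟩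
    have hsd : setDist (A i) (A j) ≤ dist z1 z2 :=
      csInf_le ⟨0, by rintro x ⟨q, -, rfl⟩; exact dist_nonneg⟩ ⟨(z1, z2), ⟨hz1, hz2⟩, rfl⟩
    exact ENNReal.ofReal_le_ofReal
      (by rw [hw]; exact Real.rpow_le_rpow (hsd0 i j) hsd hp0)
  have hint : ∑ i, ∑ j, ENNReal.ofReal (w i j) * π (A i ×ˢ A j) ≤ ∫⁻ z, F z ∂π := by
    have pd : Pairwise (Function.onFun Disjoint fun q : Fin m × Fin m => A q.1 ×ˢ A q.2) := by
      intro q q' hqq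
      have hc : q.1 ≠ q'.1 ∨ q.2 ≠ q'.2 := by
        by_contra hcon
        push_neg at hcon
        exact hqq (Prod.ext hcon.1 hcon.2)
      rcases hc with h | h
      · exact Set.disjoint_prod.mpr (Or.inl (hdisj h))
      · exact Set.disjoint_prod.mpr (Or.inr (hdisj h))
    have pm : ∀ q : Fin m × Fin m, MeasurableSet (A q.1 ×ˢ A q.2) :=
      fun q => (hAm q.1).prod (hAm q.2)
    calc ∑ i, ∑ j, ENNReal.ofReal (w i j) * π (A i ×ˢ A j)
        ≤ ∑ i, ∑ j, ∫⁻ z in A i ×ˢ A j, F z ∂π :=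
          Finset.sum_le_sum fun i _ => Finset.sum_le_sum fun j _ => hptw i j
      _ = ∑' q : Fin m × Fin m, ∫⁻ z in A q.1 ×ˢ A q.2, F z ∂π := by
          rw [tsum_fintype, Fintype.sum_prod_type]
      _ = ∫⁻ z in ⋃ q : Fin m × Fin m, A q.1 ×ˢ A q.2, F z ∂π := by
          rw [Measure.restrict_iUnion pd pm, lintegral_sum_measure]
      _ ≤ ∫⁻ z, F z ∂π := lintegral_mono' Measure.restrict_le_self le_rfl
  set lam0 : Fin m → Fin m → ℝ :=
    fun i j => if i = j then 0 else (π (A i ×ˢ A j)).toReal / ε with hlam0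
  have h00 : ∀ i j, 0 ≤ lam0 i j := by
    intro i j
    by_cases hij : i = j
    · simp [hlam0, hij]
    · simp only [hlam0, if_neg hij]
      exact div_nonneg ENNReal.toReal_nonneg hε.le
  have hd0 : ∀ i, lam0 i i = 0 := fun i => by simp [hlam0]
  have hdiv : ∀ i, Rsum lam0 i - Csum lam0 i = nub i := by
    intro i
    have hR : (∑ j, lam0 i j) = (∑ j, (π (A i ×ˢ A j)).toReal / ε)
        + (-((π (A i ×ˢ A i)).toReal / ε)) :=
      sum_split1 i _ _ _ (by
        intro j
        by_cases hj : j = i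
        · rw [hj]
          simp [hlam0]
        · simp only [hlam0, if_neg (fun h : i = j => hj h.symm), if_neg hj, add_zero])
    have hC : (∑ x, lam0 x i) = (∑ x, (π (A x ×ˢ A i)).toReal / ε)
        + (-((π (A i ×ˢ A i)).toReal / ε)) :=
      sum_split1 i _ _ _ (by
        intro x
        by_cases hx : x = i
        · rw [hx]
          simp [hlam0]
        · simp only [hlam0, if_neg hx, add_zero])
    have hRb : (∑ j, (π (A i ×ˢ A j)).toReal / ε)
        = ((μi i (A i)).toReal + ε * (νp (A i)).toReal) / ε := by
      rw [← Finset.sum_div, ← ENNReal.toReal_sum (fun j _ => hfinππ i j), hrow i,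
        ENNReal.toReal_add (measure_ne_top _ _)
          (ENNReal.mul_ne_top ENNReal.ofReal_ne_top (measure_ne_top _ _)),
        ENNReal.toReal_mul, ENNReal.toReal_ofReal hε.le]
    have hCb : (∑ x, (π (A x ×ˢ A i)).toReal / ε)
        = ((μi i (A i)).toReal + ε * (νm (A i)).toReal) / ε := by
      rw [← Finset.sum_div, ← ENNReal.toReal_sum (fun j _ => hfinππ j i), hcol i,
        ENNReal.toReal_add (measure_ne_top _ _)
          (ENNReal.mul_ne_top ENNReal.ofReal_ne_top (measure_ne_top _ _)),
        ENNReal.toReal_mul, ENNReal.toReal_ofReal hε.le]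
    show (∑ j, lam0 i j) - (∑ x, lam0 x i) = nub i
    rw [hR, hC, hRb, hCb, hnub i]
    field_simp
    ring
  obtain ⟨lamb, hb0, hbrow, hbcol, hbcost⟩ := flow_bound (geodist w)
    (geodist_triangle w hw0) (geodist_nonneg w hw0) nub lam0 h00 hd0 hdiv
  have hbdd : BddBelow {c : ℝ | ∃ lam : Fin m → Fin m → ℝ,
      (∀ i j, 0 ≤ lam i j) ∧
      (∀ i, 0 < nub i →
        ∑ j ∈ Finset.univ.filter (fun j => nub j < 0), lam i j = nub i) ∧
      (∀ j, nub j < 0 →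
        ∑ i ∈ Finset.univ.filter (fun i => 0 < nub i), lam i j = -nub j) ∧
      c = ∑ i ∈ Finset.univ.filter (fun i => 0 < nub i),
            ∑ j ∈ Finset.univ.filter (fun j => nub j < 0),
              lam i j * geodist w i j} := by
    refine ⟨0, ?_⟩
    rintro c ⟨lam, hl0, -, -, rfl⟩
    exact Finset.sum_nonneg fun i _ => Finset.sum_nonneg fun j _ =>
      mul_nonneg (hl0 i j) (geodist_nonneg w hw0 i j)
  have hnle : nuMu ≤ fcost (geodist w) lam0 := by
    rw [hnuMu]
    exact (csInf_le hbdd ⟨lamb, hb0, hbrow, hbcol, rfl⟩).trans hbcost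
  have hfg : fcost (geodist w) lam0 ≤ fcost w lam0 :=
    Finset.sum_le_sum fun i _ => Finset.sum_le_sum fun j _ =>
      mul_le_mul_of_nonneg_left (geodist_le w hw0 i j) (h00 i j)
  have hfw : fcost w lam0 ≤ (∑ i, ∑ j, (π (A i ×ˢ A j)).toReal * w i j) / ε := by
    unfold fcost
    rw [Finset.sum_div]
    refine Finset.sum_le_sum fun i _ => ?_
    rw [Finset.sum_div]
    refine Finset.sum_le_sum fun j _ => ?_
    by_cases hij : i = j
    · simp only [hlam0, if_pos hij, zero_mul]
      exact div_nonneg (mul_nonneg ENNReal.toReal_nonneg (hw0 i j)) hε.le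
    · simp only [hlam0, if_neg hij]
      exact le_of_eq (by ring)
  have hreal : ε * nuMu ≤ ∑ i, ∑ j, (π (A i ×ˢ A j)).toReal * w i j := by
    have hh := hnle.trans (hfg.trans hfw)
    have := mul_le_mul_of_nonneg_left hh hε.le
    calc ε * nuMu ≤ ε * ((∑ i, ∑ j, (π (A i ×ˢ A j)).toReal * w i j) / ε) := this
      _ = _ := by field_simp
  calc ENNReal.ofReal (ε * nuMu)
      ≤ ENNReal.ofReal (∑ i, ∑ j, (π (A i ×ˢ A j)).toReal * w i j) :=
        ENNReal.ofReal_le_ofReal hreal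
    _ = ∑ i, ∑ j, ENNReal.ofReal ((π (A i ×ˢ A j)).toReal * w i j) := by
        rw [ENNReal.ofReal_sum_of_nonneg (fun i _ => Finset.sum_nonneg fun j _ =>
          mul_nonneg ENNReal.toReal_nonneg (hw0 i j))]
        exact Finset.sum_congr rfl fun i _ =>
          ENNReal.ofReal_sum_of_nonneg fun j _ =>
            mul_nonneg ENNReal.toReal_nonneg (hw0 i j)
    _ = ∑ i, ∑ j, ENNReal.ofReal (w i j) * π (A i ×ˢ A j) := by
        refine Finset.sum_congr rfl fun i _ => Finset.sum_congr rfl fun j _ => ?_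
        rw [ENNReal.ofReal_mul ENNReal.toReal_nonneg, ENNReal.ofReal_toReal (hfinππ i j),
          mul_comm]
    _ ≤ ∫⁻ z, F z ∂π := hint

/-- Teleportation lower bound:`liminf_{ε→0⁺} ε^{-1/p} W_p(μ+εν₊, μ+εν₋) ≥ ‖ν‖_μ^{1/p}`, where `‖ν‖_μ` is the optimal
transport cost of the charges `ν̄ᵢ = ν(Aᵢ)` on the graph of components with geodesic
distances induced by the edge weights `dist(Aᵢ,Aⱼ)^p`. -/
theorem teleportation_lower_bound {k : ℕ} (p : ℝ) (hp : 1 < p) (m : ℕ) (hm : 2 ≤ m)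
    (A : Fin m → Set (EuclideanSpace ℝ (Fin k)))
    (hcpt : ∀ i, IsCompact (A i)) (hne : ∀ i, (A i).Nonempty)
    (hdisj : Pairwise (Function.onFun Disjoint A))
    (μi : Fin m → Measure (EuclideanSpace ℝ (Fin k)))
    [∀ i, IsFiniteMeasure (μi i)] (hμsupp : ∀ i, μi i (A i)ᶜ = 0)
    (hμprob : (∑ i, μi i) Set.univ = 1)
    (νp νm : Measure (EuclideanSpace ℝ (Fin k)))
    [IsFiniteMeasure νp] [IsFiniteMeasure νm]
    (hνp : νp (⋃ i, A i)ᶜ = 0) (hνm : νm (⋃ i, A i)ᶜ = 0)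
    (hbal : νp Set.univ = νm Set.univ)
    (nub : Fin m → ℝ) (hnub : ∀ i, nub i = (νp (A i)).toReal - (νm (A i)).toReal)
    (w : Fin m → Fin m → ℝ) (hw : ∀ i j, w i j = setDist (A i) (A j) ^ p)
    (nuMu : ℝ)
    (hnuMu : nuMu = sInf {c : ℝ | ∃ lam : Fin m → Fin m → ℝ,
      (∀ i j, 0 ≤ lam i j) ∧
      (∀ i, 0 < nub i →
        ∑ j ∈ Finset.univ.filter (fun j => nub j < 0), lam i j = nub i) ∧
      (∀ j, nub j < 0 →
        ∑ i ∈ Finset.univ.filter (fun i => 0 < nub i), lam i j = -nub j) ∧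
      c = ∑ i ∈ Finset.univ.filter (fun i => 0 < nub i),
            ∑ j ∈ Finset.univ.filter (fun j => nub j < 0),
              lam i j * geodist w i j}) :
    ENNReal.ofReal nuMu ^ (1 / p) ≤
      Filter.liminf (fun ε : ℝ =>
        ENNReal.ofReal ε ^ (-(1 / p)) *
          Wp p ((∑ i, μi i) + ENNReal.ofReal ε • νp)
            ((∑ i, μi i) + ENNReal.ofReal ε • νm))
        (nhdsWithin 0 (Set.Ioi 0)) := by
  have hkey := fun (ε : ℝ) (hε : 0 < ε) =>
    wpcost_lower p hp A hcpt hne hdisj μi hμsupp νp νm hνp hνm nub hnub w hw nuMu hnuMu ε hε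
  refine Filter.le_liminf_of_le (by isBoundedDefault) ?_
  refine Filter.eventually_of_mem self_mem_nhdsWithin fun ε hε => ?_
  have hεp : (0:ℝ) < ε := hε
  have hp1 : (0:ℝ) ≤ 1/p := by positivity
  have hC := hkey ε hεp
  have h2 : (ENNReal.ofReal ε * ENNReal.ofReal nuMu) ^ (1/p) ≤
      Wp p ((∑ i, μi i) + ENNReal.ofReal ε • νp) ((∑ i, μi i) + ENNReal.ofReal ε • νm) := by
    rw [← ENNReal.ofReal_mul hεp.le]
    exact ENNReal.rpow_le_rpow hC hp1
  rw [ENNReal.mul_rpow_of_nonneg _ _ hp1] at h2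
  have hεne : ENNReal.ofReal ε ≠ 0 := (ENNReal.ofReal_pos.mpr hεp).ne'
  have hεtop : ENNReal.ofReal ε ≠ ⊤ := ENNReal.ofReal_ne_top
  calc ENNReal.ofReal nuMu ^ (1/p)
      = (ENNReal.ofReal ε ^ (-(1/p)) * ENNReal.ofReal ε ^ (1/p)) *
          ENNReal.ofReal nuMu ^ (1/p) := by
        rw [← ENNReal.rpow_add _ _ hεne hεtop, neg_add_cancel, ENNReal.rpow_zero, one_mul]
    _ = ENNReal.ofReal ε ^ (-(1/p)) *
          (ENNReal.ofReal ε ^ (1/p) * ENNReal.ofReal nuMu ^ (1/p)) := mul_assoc _ _ _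
    _ ≤ ENNReal.ofReal ε ^ (-(1/p)) *
          Wp p ((∑ i, μi i) + ENNReal.ofReal ε • νp) ((∑ i, μi i) + ENNReal.ofReal ε • νm) :=
        mul_le_mul_right h2 _
end
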